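/- arXiv:2004.03171 — 5 statements merged into one kernel-verified Lean document; each statement's English description precedes it below -/
import Mathlib

section
/- Let T be the (q+1)-homogeneous rooted tree with q ≥ 2, let φ be a self-map of T and let 1 ≤ p < ∞. Then C_φ is an invertible bounded operator on T_p if and only if φ is a bijection of T and there exists M > 0 such that | |φ(v)| − |v| | ≤ M for all v ∈ T. -/
open scoped BigOperators Classical

noncomputable section

/-- `treeC q n` is the number `c_n` of vertices at level `n` of the
`(q+1)`-homogeneous rooted tree: `c_0 = 1` and `c_n = (q+1) q^(n-1)` for `n ≥ 1`. -/
def treeC (q n : ℕ) : ℕ := if n = 0 then 1 else (q + 1) * q ^ (n - 1)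

/-- An abstract `(q+1)`-homogeneous rooted tree, described by its vertex set, root,
level function `|·|` (graph distance to the root), and the level counts:
level `n` contains exactly `c_n = treeC q n` vertices. -/
structure HomTree (q : ℕ) where
  V : Type
  root : V
  level : V → ℕ
  level_eq_zero_iff : ∀ v : V, level v = 0 ↔ v = root
  finiteLevel : ∀ n : ℕ, {v : V | level v = n}.Finite
  card_level : ∀ n : ℕ, (finiteLevel n).toFinset.card = treeC q n

namespace HomTree

variable {q : ℕ} (T : HomTree q)

/-- The set `D_n` of vertices of level `n`, as a finset. -/
def levelFinset (n : ℕ) : Finset T.V := (T.finiteLevel n).toFinset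

/-- `M_p(n, f)` for `0 < p < ∞`:
`M_p(n,f) = ((1/c_n) ∑_{|v|=n} |f v|^p)^(1/p)` (which equals `|f o|` for `n = 0`). -/
def Mp (p : ℝ) (n : ℕ) (f : T.V → ℂ) : ℝ :=
  ((1 / (treeC q n : ℝ)) * ∑ v ∈ T.levelFinset n, ‖f v‖ ^ p) ^ (1 / p)

/-- `M_∞(n, f) = max_{|v| = n} |f v|`. -/
def Minf (n : ℕ) (f : T.V → ℂ) : ℝ :=
  sSup ((fun v => ‖f v‖) '' {v : T.V | T.level v = n})

/-- `f ∈ T_p`, i.e. `‖f‖_p = sup_n M_p(n,f) < ∞`. -/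
def memTp (p : ℝ) (f : T.V → ℂ) : Prop := BddAbove (Set.range fun n => T.Mp p n f)

/-- `‖f‖_p = sup_n M_p(n, f)`. -/
def normTp (p : ℝ) (f : T.V → ℂ) : ℝ := ⨆ n, T.Mp p n f

/-- `f ∈ T_∞`. -/
def memTinf (f : T.V → ℂ) : Prop := BddAbove (Set.range fun n => T.Minf n f)

/-- `‖f‖_∞ = sup_n M_∞(n, f)`. -/
def normTinf (f : T.V → ℂ) : ℝ := ⨆ n, T.Minf n f

/-- `f ∈ T_{p,0}`: `f ∈ T_p` and `M_p(n,f) → 0` as `n → ∞`. -/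
def memTp0 (p : ℝ) (f : T.V → ℂ) : Prop :=
  T.memTp p f ∧ Filter.Tendsto (fun n => T.Mp p n f) Filter.atTop (nhds 0)

/-- `f ∈ T_{∞,0}`. -/
def memTinf0 (f : T.V → ℂ) : Prop :=
  T.memTinf f ∧ Filter.Tendsto (fun n => T.Minf n f) Filter.atTop (nhds 0)

/-- `N_φ(n, w)`: the number of preimages of `w` under `φ` at level `n`. -/
def Nphi (phi : T.V → T.V) (n : ℕ) (w : T.V) : ℕ :=
  ((T.levelFinset n).filter fun v => phi v = w).card

/-- `N_{m,n} = max_{|w| = m} N_φ(n, w)`. -/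
def Nmax (phi : T.V → T.V) (m n : ℕ) : ℕ :=
  (T.levelFinset m).sup fun w => T.Nphi phi n w

/-- `C_φ` is a bounded operator on `T_p`: it maps `T_p` into `T_p` and
`‖f ∘ φ‖_p ≤ C ‖f‖_p` for some constant `C`. -/
def BoundedCompTp (p : ℝ) (phi : T.V → T.V) : Prop :=
  (∀ f : T.V → ℂ, T.memTp p f → T.memTp p (f ∘ phi)) ∧
  ∃ C : ℝ, ∀ f : T.V → ℂ, T.memTp p f → T.normTp p (f ∘ phi) ≤ C * T.normTp p f

/-- The operator norm of `C_φ` on `T_p`: `sup {‖f ∘ φ‖_p : f ∈ T_p, ‖f‖_p = 1}`. -/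
def opNormTp (p : ℝ) (phi : T.V → T.V) : ℝ :=
  sSup {x : ℝ | ∃ f : T.V → ℂ, T.memTp p f ∧ T.normTp p f = 1 ∧ x = T.normTp p (f ∘ phi)}

/-- `C_φ` is a bounded operator on `T_{p,0}`. -/
def BoundedCompTp0 (p : ℝ) (phi : T.V → T.V) : Prop :=
  (∀ f : T.V → ℂ, T.memTp0 p f → T.memTp0 p (f ∘ phi)) ∧
  ∃ C : ℝ, ∀ f : T.V → ℂ, T.memTp0 p f → T.normTp p (f ∘ phi) ≤ C * T.normTp p f

/-- The operator norm of `C_φ` on `T_{p,0}`. -/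
def opNormTp0 (p : ℝ) (phi : T.V → T.V) : ℝ :=
  sSup {x : ℝ | ∃ f : T.V → ℂ, T.memTp0 p f ∧ T.normTp p f = 1 ∧ x = T.normTp p (f ∘ phi)}

/-- `C_φ` is a bounded operator on `T_{∞,0}`. -/
def BoundedCompTinf0 (phi : T.V → T.V) : Prop :=
  (∀ f : T.V → ℂ, T.memTinf0 f → T.memTinf0 (f ∘ phi)) ∧
  ∃ C : ℝ, ∀ f : T.V → ℂ, T.memTinf0 f → T.normTinf (f ∘ phi) ≤ C * T.normTinf f

end HomTree
namespace HomTree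

variable {q : ℕ} (T : HomTree q)

/-- `C_φ` is an invertible bounded operator on `T_p`: there is a bounded linear
operator `B` on `T_p` with `B ∘ C_φ = C_φ ∘ B = id` on `T_p`. -/
def InvertibleCompTp (p : ℝ) (phi : T.V → T.V) : Prop :=
  T.BoundedCompTp p phi ∧
  ∃ B : (T.V → ℂ) → (T.V → ℂ),
    (∀ f g : T.V → ℂ, T.memTp p f → T.memTp p g → B (f + g) = B f + B g) ∧
    (∀ (c : ℂ) (f : T.V → ℂ), T.memTp p f → B (c • f) = c • B f) ∧
    (∀ f : T.V → ℂ, T.memTp p f → T.memTp p (B f)) ∧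
    (∃ C : ℝ, ∀ f : T.V → ℂ, T.memTp p f → T.normTp p (B f) ≤ C * T.normTp p f) ∧
    (∀ f : T.V → ℂ, T.memTp p f → B (f ∘ phi) = f) ∧
    (∀ f : T.V → ℂ, T.memTp p f → (B f) ∘ phi = f)

end HomTree
namespace HomTreeAux

lemma treeC_zero (q : ℕ) : treeC q 0 = 1 := by simp [treeC]

lemma treeC_eq {q n : ℕ} (h : n ≠ 0) : treeC q n = (q + 1) * q ^ (n - 1) := if_neg h

lemma treeC_pos {q : ℕ} (hq : 1 ≤ q) (n : ℕ) : 0 < treeC q n := by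
  unfold treeC; split
  · norm_num
  · positivity

lemma treeC_mono {q : ℕ} (hq : 1 ≤ q) {m n : ℕ} (h : m ≤ n) : treeC q m ≤ treeC q n := by
  rcases Nat.eq_zero_or_pos m with hm | hm
  · subst hm; rw [treeC_zero]; exact treeC_pos hq n
  · rw [treeC_eq (by omega : m ≠ 0), treeC_eq (by omega : n ≠ 0)]
    exact Nat.mul_le_mul le_rfl (Nat.pow_le_pow_right hq (by omega))

lemma treeC_add_le {q : ℕ} (hq : 1 ≤ q) (n k : ℕ) :
    treeC q (n + k) ≤ (q + 1) * q ^ k * treeC q n := by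
  rcases Nat.eq_zero_or_pos n with hn | hn
  · subst hn
    rcases Nat.eq_zero_or_pos k with hk | hk
    · subst hk; simp [treeC]
    · rw [Nat.zero_add, treeC_zero, treeC_eq (by omega : k ≠ 0), Nat.mul_one]
      exact Nat.mul_le_mul le_rfl (Nat.pow_le_pow_right hq (by omega))
  · rw [treeC_eq (by omega : n + k ≠ 0), treeC_eq (by omega : n ≠ 0)]
    have h2 : n + k - 1 = k + (n - 1) := by omega
    rw [h2, pow_add]
    calc (q + 1) * (q ^ k * q ^ (n - 1))
        = q ^ k * ((q + 1) * q ^ (n - 1)) := by ring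
      _ ≤ ((q + 1) * q ^ k) * ((q + 1) * q ^ (n - 1)) :=
          Nat.mul_le_mul (Nat.le_mul_of_pos_left _ (by omega)) le_rfl

lemma two_pow_le_treeC {q : ℕ} (hq : 2 ≤ q) (n k : ℕ) :
    2 ^ k * treeC q n ≤ (q + 1) * treeC q (n + k) := by
  have hpow : 2 ^ k ≤ q ^ k := Nat.pow_le_pow_left hq k
  rcases Nat.eq_zero_or_pos n with hn | hn
  · subst hn
    rcases Nat.eq_zero_or_pos k with hk | hk
    · subst hk; simp [treeC]
    · rw [Nat.zero_add, treeC_zero, treeC_eq (by omega : k ≠ 0), Nat.mul_one]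
      have h1 : 2 ^ k = 2 * 2 ^ (k - 1) := by
        conv_lhs => rw [show k = 1 + (k - 1) by omega, pow_add, pow_one]
      have h2 : 2 ^ (k - 1) ≤ q ^ (k - 1) := Nat.pow_le_pow_left hq _
      calc 2 ^ k = 2 * 2 ^ (k - 1) := h1
        _ ≤ (q + 1) * q ^ (k - 1) := Nat.mul_le_mul (by omega) h2
        _ ≤ (q + 1) * ((q + 1) * q ^ (k - 1)) := Nat.le_mul_of_pos_left _ (by omega)
  · rw [treeC_eq (by omega : n + k ≠ 0), treeC_eq (by omega : n ≠ 0)]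
    have h2 : n + k - 1 = k + (n - 1) := by omega
    rw [h2, pow_add]
    calc 2 ^ k * ((q + 1) * q ^ (n - 1)) ≤ q ^ k * ((q + 1) * q ^ (n - 1)) :=
          Nat.mul_le_mul hpow le_rfl
      _ = (q + 1) * (q ^ k * q ^ (n - 1)) := by ring
      _ ≤ (q + 1) * ((q + 1) * (q ^ k * q ^ (n - 1))) := Nat.le_mul_of_pos_left _ (by omega)

/-- If `c_m ≤ A c_n` then `m ≤ n + (q+1) A`. -/
lemma level_bound_of_treeC_le {q : ℕ} (hq : 2 ≤ q) {m n : ℕ} {A : ℝ} (hA : 0 ≤ A)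
    (h : (treeC q m : ℝ) ≤ A * treeC q n) : (m : ℝ) ≤ (n : ℝ) + (q + 1) * A := by
  rcases le_or_gt m n with hmn | hmn
  · have h1 : (m : ℝ) ≤ n := by exact_mod_cast hmn
    have h2 : (0:ℝ) ≤ ((q : ℝ) + 1) * A := by positivity
    linarith
  · set k := m - n with hk
    have hmk : m = n + k := by omega
    have hcn : (0 : ℝ) < treeC q n := by exact_mod_cast treeC_pos (by omega) n
    have h2 : ((2 ^ k * treeC q n : ℕ) : ℝ) ≤ ((q + 1) * treeC q (n + k) : ℕ) := by
      exact_mod_cast two_pow_le_treeC hq n k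
    push_cast at h2
    rw [← hmk] at h2
    have h3 : (2 : ℝ) ^ k * treeC q n ≤ (((q : ℝ) + 1) * A) * treeC q n := by
      calc (2 : ℝ) ^ k * treeC q n ≤ ((q : ℝ) + 1) * treeC q m := h2
        _ ≤ ((q : ℝ) + 1) * (A * treeC q n) := by
            apply mul_le_mul_of_nonneg_left h (by positivity)
        _ = (((q : ℝ) + 1) * A) * treeC q n := by ring
    have h4 : (2 : ℝ) ^ k ≤ ((q : ℝ) + 1) * A := (mul_le_mul_iff_of_pos_right hcn).mp h3
    have h5 : (k : ℝ) ≤ 2 ^ k := by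
      have h6 : (k : ℝ) < ((2 ^ k : ℕ) : ℝ) := by exact_mod_cast Nat.lt_two_pow_self (n := k)
      push_cast at h6
      linarith
    have h7 : (m : ℝ) = n + k := by exact_mod_cast hmk
    rw [h7]
    linarith

end HomTreeAux
namespace HomTree
open HomTreeAux

variable {q : ℕ} (T : HomTree q)

lemma mem_levelFinset' {v : T.V} {n : ℕ} : v ∈ T.levelFinset n ↔ T.level v = n := by
  simp [levelFinset, Set.Finite.mem_toFinset]

lemma Mp_nonneg (p : ℝ) (n : ℕ) (f : T.V → ℂ) : 0 ≤ T.Mp p n f := by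
  apply Real.rpow_nonneg
  apply mul_nonneg (by positivity)
  exact Finset.sum_nonneg fun w _ => Real.rpow_nonneg (norm_nonneg _) _

lemma normTp_nonneg (p : ℝ) (f : T.V → ℂ) : 0 ≤ T.normTp p f :=
  Real.iSup_nonneg fun n => T.Mp_nonneg p n f

lemma sum_level_le (hq : 1 ≤ q) {p : ℝ} (hp : 1 ≤ p) (f : T.V → ℂ) (hf : T.memTp p f)
    (m : ℕ) :
    ∑ w ∈ T.levelFinset m, ‖f w‖ ^ p ≤ (treeC q m : ℝ) * T.normTp p f ^ p := by
  have hp0 : (0:ℝ) < p := by linarith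
  have hc : (0:ℝ) < (treeC q m : ℝ) := by exact_mod_cast treeC_pos hq m
  have hS : (0:ℝ) ≤ ∑ w ∈ T.levelFinset m, ‖f w‖ ^ p :=
    Finset.sum_nonneg fun w _ => Real.rpow_nonneg (norm_nonneg _) _
  have hbase : (0:ℝ) ≤ (1 / (treeC q m : ℝ)) * ∑ w ∈ T.levelFinset m, ‖f w‖ ^ p :=
    mul_nonneg (by positivity) hS
  have h1 : T.Mp p m f ^ p
      = (1 / (treeC q m : ℝ)) * ∑ w ∈ T.levelFinset m, ‖f w‖ ^ p := by
    unfold Mp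
    rw [← Real.rpow_mul hbase, one_div p, inv_mul_cancel₀ hp0.ne', Real.rpow_one]
  have h2 : T.Mp p m f ^ p ≤ T.normTp p f ^ p :=
    Real.rpow_le_rpow (T.Mp_nonneg p m f) (le_ciSup hf m) hp0.le
  calc ∑ w ∈ T.levelFinset m, ‖f w‖ ^ p
      = (treeC q m : ℝ) * ((1 / (treeC q m : ℝ)) * ∑ w ∈ T.levelFinset m, ‖f w‖ ^ p) := by
        field_simp
    _ = (treeC q m : ℝ) * T.Mp p m f ^ p := by rw [h1]
    _ ≤ (treeC q m : ℝ) * T.normTp p f ^ p := mul_le_mul_of_nonneg_left h2 hc.le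

/-- The key boundedness estimate: if `ψ` is injective and moves levels by at most `N`, then
`M_p(n, f ∘ ψ) ≤ K^{1/p} ‖f‖_p` with `K = (2N+1)(q+1)q^N`. -/
lemma Mp_comp_le (hq : 1 ≤ q) {p : ℝ} (hp : 1 ≤ p) (ψ : T.V → T.V)
    (hinj : Function.Injective ψ) (N : ℕ)
    (hN1 : ∀ v, T.level (ψ v) ≤ T.level v + N) (hN2 : ∀ v, T.level v ≤ T.level (ψ v) + N)
    (f : T.V → ℂ) (hf : T.memTp p f) (n : ℕ) :
    T.Mp p n (f ∘ ψ)
      ≤ (((2 * N + 1) * ((q + 1) * q ^ N) : ℕ) : ℝ) ^ (1 / p) * T.normTp p f := by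
  have hp0 : (0:ℝ) < p := by linarith
  set K : ℕ := (2 * N + 1) * ((q + 1) * q ^ N) with hKdef
  have hKpos : 0 < K := Nat.mul_pos (by omega) (Nat.mul_pos (by omega) (pow_pos (by omega) N))
  have hK : (0:ℝ) < (K : ℝ) := by exact_mod_cast hKpos
  have hcn : (0:ℝ) < (treeC q n : ℝ) := by exact_mod_cast treeC_pos hq n
  have hterm : ∀ w, (0:ℝ) ≤ ‖f w‖ ^ p :=
    fun w => Real.rpow_nonneg (norm_nonneg _) _
  have hB : (0:ℝ) ≤ T.normTp p f ^ p := Real.rpow_nonneg (T.normTp_nonneg p f) p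
  have hsub : (T.levelFinset n).image ψ ⊆ (Finset.Icc (n - N) (n + N)).biUnion T.levelFinset := by
    intro w hw
    obtain ⟨v, hv, rfl⟩ := Finset.mem_image.mp hw
    have hlv : T.level v = n := T.mem_levelFinset'.mp hv
    have ha := hN1 v
    have hb := hN2 v
    rw [Finset.mem_biUnion]
    exact ⟨T.level (ψ v), Finset.mem_Icc.mpr ⟨by omega, by omega⟩, T.mem_levelFinset'.mpr rfl⟩
  have hdisj : Set.PairwiseDisjoint ↑(Finset.Icc (n - N) (n + N)) T.levelFinset := by
    intro a _ b _ hab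
    simp only [Function.onFun]
    rw [Finset.disjoint_left]
    intro v hva hvb
    exact hab ((T.mem_levelFinset'.mp hva).symm.trans (T.mem_levelFinset'.mp hvb))
  have hnat : (Finset.Icc (n - N) (n + N)).card * treeC q (n + N) ≤ K * treeC q n := by
    have hcard : (Finset.Icc (n - N) (n + N)).card ≤ 2 * N + 1 := by
      rw [Nat.card_Icc]; omega
    calc (Finset.Icc (n - N) (n + N)).card * treeC q (n + N)
        ≤ (2 * N + 1) * ((q + 1) * q ^ N * treeC q n) :=
          Nat.mul_le_mul hcard (treeC_add_le hq n N)
      _ = K * treeC q n := by rw [hKdef]; ring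
  have hsum : ∑ v ∈ T.levelFinset n, ‖f (ψ v)‖ ^ p
      ≤ (K : ℝ) * treeC q n * T.normTp p f ^ p := by
    calc ∑ v ∈ T.levelFinset n, ‖f (ψ v)‖ ^ p
        = ∑ w ∈ (T.levelFinset n).image ψ, ‖f w‖ ^ p := by
          have himg : ∑ w ∈ (T.levelFinset n).image ψ, ‖f w‖ ^ p
              = ∑ v ∈ T.levelFinset n, ‖f (ψ v)‖ ^ p :=
            Finset.sum_image fun a _ b _ h => hinj h
          exact himg.symm
      _ ≤ ∑ w ∈ (Finset.Icc (n - N) (n + N)).biUnion T.levelFinset, ‖f w‖ ^ p :=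
          Finset.sum_le_sum_of_subset_of_nonneg hsub fun w _ _ => hterm w
      _ = ∑ m ∈ Finset.Icc (n - N) (n + N), ∑ w ∈ T.levelFinset m, ‖f w‖ ^ p :=
          Finset.sum_biUnion hdisj
      _ ≤ ∑ m ∈ Finset.Icc (n - N) (n + N), (treeC q m : ℝ) * T.normTp p f ^ p :=
          Finset.sum_le_sum fun m _ => T.sum_level_le hq hp f hf m
      _ ≤ (Finset.Icc (n - N) (n + N)).card • ((treeC q (n + N) : ℝ) * T.normTp p f ^ p) := by
          apply Finset.sum_le_card_nsmul
          intro m hm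
          have h3 : treeC q m ≤ treeC q (n + N) := treeC_mono hq (Finset.mem_Icc.mp hm).2
          exact mul_le_mul_of_nonneg_right (by exact_mod_cast h3) hB
      _ = (((Finset.Icc (n - N) (n + N)).card * treeC q (n + N) : ℕ) : ℝ) * T.normTp p f ^ p := by
          push_cast [nsmul_eq_mul]; ring
      _ ≤ ((K * treeC q n : ℕ) : ℝ) * T.normTp p f ^ p := by
          apply mul_le_mul_of_nonneg_right _ hB
          exact_mod_cast hnat
      _ = (K : ℝ) * treeC q n * T.normTp p f ^ p := by push_cast; ring
  have hbase : (0:ℝ) ≤ (1 / (treeC q n : ℝ)) * ∑ v ∈ T.levelFinset n, ‖(f ∘ ψ) v‖ ^ p :=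
    mul_nonneg (by positivity) (Finset.sum_nonneg fun w _ => hterm (ψ w))
  have hle : (1 / (treeC q n : ℝ)) * ∑ v ∈ T.levelFinset n, ‖(f ∘ ψ) v‖ ^ p
      ≤ (K : ℝ) * T.normTp p f ^ p := by
    have h4 : (1 / (treeC q n : ℝ)) * ((K : ℝ) * treeC q n * T.normTp p f ^ p)
        = (K : ℝ) * T.normTp p f ^ p := by
      field_simp
    calc (1 / (treeC q n : ℝ)) * ∑ v ∈ T.levelFinset n, ‖(f ∘ ψ) v‖ ^ p
        ≤ (1 / (treeC q n : ℝ)) * ((K : ℝ) * treeC q n * T.normTp p f ^ p) :=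
          mul_le_mul_of_nonneg_left hsum (by positivity)
      _ = (K : ℝ) * T.normTp p f ^ p := h4
  unfold Mp
  calc ((1 / (treeC q n : ℝ)) * ∑ v ∈ T.levelFinset n, ‖(f ∘ ψ) v‖ ^ p) ^ (1 / p)
      ≤ ((K : ℝ) * T.normTp p f ^ p) ^ (1 / p) :=
        Real.rpow_le_rpow hbase hle (by positivity)
    _ = (K : ℝ) ^ (1 / p) * T.normTp p f := by
        rw [Real.mul_rpow hK.le hB, ← Real.rpow_mul (T.normTp_nonneg p f),
          mul_one_div_cancel hp0.ne', Real.rpow_one]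

end HomTree
namespace HomTree
open HomTreeAux

variable {q : ℕ} (T : HomTree q)

/-- The indicator function of the vertex `w`. -/
def ind (w : T.V) : T.V → ℂ := fun v => if v = w then 1 else 0

lemma Mp_ind (hq : 1 ≤ q) {p : ℝ} (hp : 1 ≤ p) (w : T.V) (n : ℕ) :
    T.Mp p n (T.ind w)
      = if T.level w = n then (1 / (treeC q (T.level w) : ℝ)) ^ (1 / p) else 0 := by
  have hp0 : (0:ℝ) < p := by linarith
  have hsum : ∑ v ∈ T.levelFinset n, ‖T.ind w v‖ ^ p
      = if T.level w = n then (1:ℝ) else 0 := by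
    have h1 : ∀ v : T.V, ‖T.ind w v‖ ^ p = if v = w then (1:ℝ) else 0 := by
      intro v; unfold ind; split
      · simp
      · simp [Real.zero_rpow hp0.ne']
    calc ∑ v ∈ T.levelFinset n, ‖T.ind w v‖ ^ p
        = ∑ v ∈ T.levelFinset n, if v = w then (1:ℝ) else 0 :=
          Finset.sum_congr rfl fun v _ => h1 v
      _ = if w ∈ T.levelFinset n then (1:ℝ) else 0 := Finset.sum_ite_eq' _ _ _
      _ = if T.level w = n then (1:ℝ) else 0 := by simp only [T.mem_levelFinset']
  unfold Mp
  rw [hsum]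
  split
  · rename_i h; rw [mul_one, h]
  · rw [mul_zero, Real.zero_rpow (one_div_ne_zero hp0.ne')]

lemma memTp_ind (hq : 1 ≤ q) {p : ℝ} (hp : 1 ≤ p) (w : T.V) : T.memTp p (T.ind w) := by
  refine ⟨(1 / (treeC q (T.level w) : ℝ)) ^ (1 / p), ?_⟩
  rintro x ⟨n, rfl⟩
  show T.Mp p n (T.ind w) ≤ _
  rw [T.Mp_ind hq hp]
  split
  · exact le_rfl
  · exact Real.rpow_nonneg (by positivity) _

lemma normTp_ind (hq : 1 ≤ q) {p : ℝ} (hp : 1 ≤ p) (w : T.V) :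
    T.normTp p (T.ind w) = (1 / (treeC q (T.level w) : ℝ)) ^ (1 / p) := by
  apply le_antisymm
  · apply ciSup_le
    intro n
    rw [T.Mp_ind hq hp]
    split
    · exact le_rfl
    · exact Real.rpow_nonneg (by positivity) _
  · have h1 := le_ciSup (T.memTp_ind hq hp w) (T.level w)
    rwa [T.Mp_ind hq hp, if_pos rfl] at h1

/-- From the norm inequality for indicators, a level bound. -/
lemma level_le_of_ind_le (hq : 2 ≤ q) {p : ℝ} (hp : 1 ≤ p) {a b : ℕ} {C : ℝ}
    (h : (1 / (treeC q a : ℝ)) ^ (1 / p) ≤ C * (1 / (treeC q b : ℝ)) ^ (1 / p)) :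
    (b : ℝ) ≤ (a : ℝ) + ((q : ℝ) + 1) * |C| ^ p := by
  have hp0 : (0:ℝ) < p := by linarith
  have hca : (0:ℝ) < (treeC q a : ℝ) := by exact_mod_cast treeC_pos (by omega) a
  have hcb : (0:ℝ) < (treeC q b : ℝ) := by exact_mod_cast treeC_pos (by omega) b
  have hxa : (0:ℝ) < (1 / (treeC q a : ℝ)) ^ (1 / p) :=
    Real.rpow_pos_of_pos (by positivity) _
  have hxb : (0:ℝ) < (1 / (treeC q b : ℝ)) ^ (1 / p) :=
    Real.rpow_pos_of_pos (by positivity) _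
  have hC : 0 < C := by nlinarith [hxa.trans_le h]
  have hrp := Real.rpow_le_rpow hxa.le h hp0.le
  rw [Real.mul_rpow hC.le hxb.le, ← Real.rpow_mul (by positivity : (0:ℝ) ≤ 1 / (treeC q a : ℝ)),
    ← Real.rpow_mul (by positivity : (0:ℝ) ≤ 1 / (treeC q b : ℝ)), one_div p,
    inv_mul_cancel₀ hp0.ne', Real.rpow_one, Real.rpow_one] at hrp
  have h2 : (treeC q b : ℝ) ≤ C ^ p * treeC q a := by
    rw [mul_one_div] at hrp
    rw [div_le_div_iff₀ hca hcb] at hrp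
    linarith
  have h3 := level_bound_of_treeC_le hq (Real.rpow_nonneg hC.le p) h2
  rwa [abs_of_pos hC]

end HomTree

/-- For `q ≥ 2` and `1 ≤ p < ∞`: `C_φ` is invertible on `T_p` iff `φ` is bijective and
`||φ v| − |v|| ≤ M` for some `M > 0` and all `v`. -/
theorem invertible_comp_Tp_iff (q : ℕ) (hq : 2 ≤ q) (T : HomTree q)
    (p : ℝ) (hp : 1 ≤ p) (phi : T.V → T.V) :
    T.InvertibleCompTp p phi ↔
      (Function.Bijective phi ∧
        ∃ M : ℝ, 0 < M ∧ ∀ v : T.V, |(T.level (phi v) : ℝ) - (T.level v : ℝ)| ≤ M) := by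
  have hq1 : 1 ≤ q := by omega
  have hp0 : (0:ℝ) < p := by linarith
  constructor
  · rintro ⟨⟨hmap, C, hC⟩, B, hadd, hsmul, hBmem, ⟨C', hC'⟩, hBl, hBr⟩
    -- injectivity
    have hinj : Function.Injective phi := by
      intro a b hab
      have h1 := congrFun (hBr (T.ind a) (T.memTp_ind hq1 hp a)) a
      have h2 := congrFun (hBr (T.ind a) (T.memTp_ind hq1 hp a)) b
      simp only [Function.comp] at h1 h2
      rw [hab] at h1
      have h3 : T.ind a b = T.ind a a := h2.symm.trans h1
      by_contra hne
      have hba : ¬ (b = a) := fun h => hne h.symm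
      simp [HomTree.ind, hba] at h3
    -- surjectivity
    have hsurj : Function.Surjective phi := by
      intro w
      by_contra hw
      push_neg at hw
      have hcomp : T.ind w ∘ phi = (0 : ℂ) • T.ind w := by
        funext v
        simp [Function.comp, HomTree.ind, hw v]
      have hB0 : B (T.ind w ∘ phi) = (0:ℂ) • B (T.ind w) := by
        rw [hcomp]; exact hsmul 0 _ (T.memTp_ind hq1 hp w)
      have h1 := hBl (T.ind w) (T.memTp_ind hq1 hp w)
      rw [hB0] at h1
      have h2 := congrFun h1 w
      simp [HomTree.ind] at h2
    have hbij : Function.Bijective phi := ⟨hinj, hsurj⟩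
    set e := Equiv.ofBijective phi hbij with he
    have hBeq : ∀ f : T.V → ℂ, T.memTp p f → B f = fun w => f (e.symm w) := by
      intro f hf
      funext w
      have h1 := congrFun (hBr f hf) (e.symm w)
      simp only [Function.comp] at h1
      rw [Equiv.ofBijective_apply_symm_apply phi hbij w] at h1
      exact h1
    refine ⟨hbij, ((q:ℝ) + 1) * (|C| ^ p + |C'| ^ p) + 1, by positivity, ?_⟩
    intro v
    -- upper bound on level (phi v)
    have hup : (T.level (phi v) : ℝ) ≤ (T.level v : ℝ) + ((q:ℝ) + 1) * |C| ^ p := by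
      have hf1 : T.memTp p (T.ind (phi v)) := T.memTp_ind hq1 hp (phi v)
      have hcomp2 : T.ind (phi v) ∘ phi = T.ind v := by
        funext x
        simp only [Function.comp, HomTree.ind]
        by_cases hx : x = v
        · simp [hx]
        · rw [if_neg (fun h => hx (hinj h)), if_neg hx]
      have h1 := hC _ hf1
      rw [hcomp2, T.normTp_ind hq1 hp, T.normTp_ind hq1 hp] at h1
      exact HomTree.level_le_of_ind_le hq hp h1
    -- lower bound
    have hdown : (T.level v : ℝ) ≤ (T.level (phi v) : ℝ) + ((q:ℝ) + 1) * |C'| ^ p := by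
      have hf2 : T.memTp p (T.ind v) := T.memTp_ind hq1 hp v
      have h1 := hC' (T.ind v) hf2
      rw [hBeq _ hf2] at h1
      have h2 : (fun w => T.ind v (e.symm w)) = T.ind (phi v) := by
        funext w
        simp only [HomTree.ind]
        by_cases hw : w = phi v
        · rw [if_pos, if_pos hw]
          rw [hw]
          exact Equiv.ofBijective_symm_apply_apply phi hbij v
        · rw [if_neg, if_neg hw]
          intro h
          apply hw
          rw [← Equiv.ofBijective_apply_symm_apply phi hbij w, h]
      rw [h2, T.normTp_ind hq1 hp, T.normTp_ind hq1 hp] at h1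
      exact HomTree.level_le_of_ind_le hq hp h1
    have hC1 : (0:ℝ) ≤ |C| ^ p := Real.rpow_nonneg (abs_nonneg _) _
    have hC2 : (0:ℝ) ≤ |C'| ^ p := Real.rpow_nonneg (abs_nonneg _) _
    have hq0 : (0:ℝ) ≤ (q:ℝ) + 1 := by positivity
    rw [abs_le]
    constructor
    · nlinarith
    · nlinarith
  · rintro ⟨hbij, M, hM, hMd⟩
    set N : ℕ := ⌈M⌉₊ with hN
    have hMN : M ≤ (N : ℝ) := Nat.le_ceil M
    have hNd1 : ∀ v, T.level (phi v) ≤ T.level v + N := by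
      intro v
      have h2 := abs_le.mp (hMd v)
      have h3 : (T.level (phi v) : ℝ) ≤ (T.level v : ℝ) + N := by linarith [h2.2]
      exact_mod_cast h3
    have hNd2 : ∀ v, T.level v ≤ T.level (phi v) + N := by
      intro v
      have h2 := abs_le.mp (hMd v)
      have h3 : (T.level v : ℝ) ≤ (T.level (phi v) : ℝ) + N := by linarith [h2.1]
      exact_mod_cast h3
    set e := Equiv.ofBijective phi hbij with he
    have hphie : ∀ w, phi (e.symm w) = w := fun w => Equiv.ofBijective_apply_symm_apply phi hbij w
    have hNi1 : ∀ w, T.level (e.symm w) ≤ T.level w + N := by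
      intro w
      have := hNd2 (e.symm w)
      rwa [hphie w] at this
    have hNi2 : ∀ w, T.level w ≤ T.level (e.symm w) + N := by
      intro w
      have := hNd1 (e.symm w)
      rwa [hphie w] at this
    set C0 : ℝ := (((2 * N + 1) * ((q + 1) * q ^ N) : ℕ) : ℝ) ^ (1 / p) with hC0
    have keyφ : ∀ f : T.V → ℂ, T.memTp p f → ∀ n, T.Mp p n (f ∘ phi) ≤ C0 * T.normTp p f :=
      fun f hf n => T.Mp_comp_le hq1 hp phi hbij.injective N hNd1 hNd2 f hf n
    have keyψ : ∀ f : T.V → ℂ, T.memTp p f →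
        ∀ n, T.Mp p n (f ∘ fun w => e.symm w) ≤ C0 * T.normTp p f :=
      fun f hf n => T.Mp_comp_le hq1 hp (fun w => e.symm w)
        (fun x y h => e.symm.injective h) N hNi1 hNi2 f hf n
    have memφ : ∀ f : T.V → ℂ, T.memTp p f → T.memTp p (f ∘ phi) := by
      intro f hf
      exact ⟨C0 * T.normTp p f, by rintro x ⟨n, rfl⟩; exact keyφ f hf n⟩
    refine ⟨⟨memφ, C0, fun f hf => ciSup_le (keyφ f hf)⟩,
      fun f => f ∘ fun w => e.symm w, ?_, ?_, ?_, ?_, ?_, ?_⟩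
    · intro f g _ _; rfl
    · intro c f _; rfl
    · intro f hf
      exact ⟨C0 * T.normTp p f, by rintro x ⟨n, rfl⟩; exact keyψ f hf n⟩
    · exact ⟨C0, fun f hf => ciSup_le (keyψ f hf)⟩
    · intro f _
      funext w
      show f (phi (e.symm w)) = f w
      rw [hphie w]
    · intro f _
      funext v
      show f (e.symm (phi v)) = f v
      rw [show e.symm (phi v) = v from Equiv.ofBijective_symm_apply_apply phi hbij v]
end
end

section
/- Let T be the (q+1)-homogeneous rooted tree, q ≥ 1, and φ a self-map of T. Then C_φ is an isometry on T_∞ (i.e. ‖f ∘ φ‖_∞ = ‖f‖_∞ for all f ∈ T_∞) if and only if φ is surjective. -/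
open scoped BigOperators Classical

noncomputable section

namespace HomTree

variable {q : ℕ} (T : HomTree q)

lemma levelSet_nonempty (hq : 1 ≤ q) (n : ℕ) : {v : T.V | T.level v = n}.Nonempty := by
  have h := T.card_level n
  have hpos : 0 < treeC q n := by
    unfold treeC
    split
    · exact Nat.one_pos
    · exact Nat.mul_pos (Nat.succ_pos q) (pow_pos hq _)
  rw [← h] at hpos
  obtain ⟨v, hv⟩ := Finset.card_pos.mp hpos
  exact ⟨v, (T.finiteLevel n).mem_toFinset.mp hv⟩

lemma abs_le_Minf (f : T.V → ℂ) (v : T.V) :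
    ‖f v‖ ≤ T.Minf (T.level v) f := by
  apply le_csSup
  · exact ((T.finiteLevel (T.level v)).image _).bddAbove
  · exact ⟨v, rfl, rfl⟩

lemma Minf_le (hq : 1 ≤ q) (f : T.V → ℂ) (n : ℕ) (B : ℝ)
    (h : ∀ v, T.level v = n → ‖f v‖ ≤ B) : T.Minf n f ≤ B := by
  apply csSup_le ((T.levelSet_nonempty hq n).image _)
  rintro x ⟨v, hv, rfl⟩
  exact h v hv

end HomTree
/-- `C_φ` is an isometry on `T_∞` iff `φ` is surjective. -/
theorem isometry_comp_Tinf_iff (q : ℕ) (hq : 1 ≤ q) (T : HomTree q) (phi : T.V → T.V) :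
    ((∀ f : T.V → ℂ, T.memTinf f → T.memTinf (f ∘ phi)) ∧
      (∀ f : T.V → ℂ, T.memTinf f → T.normTinf (f ∘ phi) = T.normTinf f)) ↔
    Function.Surjective phi := by
  constructor
  · rintro ⟨-, hnorm⟩ w
    by_contra hw
    push_neg at hw
    set f : T.V → ℂ := fun u => if u = w then 1 else 0 with hf
    have hfb : ∀ n, T.Minf n f ≤ 1 := by
      intro n
      apply T.Minf_le hq
      intro v _
      simp only [hf]
      split <;> simp
    have hmemf : T.memTinf f := ⟨1, by rintro x ⟨n, rfl⟩; exact hfb n⟩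
    have hcomp : f ∘ phi = fun _ => (0 : ℂ) := by
      funext v
      simp only [Function.comp, hf, if_neg (hw v)]
    have hMz : ∀ n, T.Minf n (f ∘ phi) = 0 := by
      intro n
      refine le_antisymm (T.Minf_le hq _ n 0 ?_) ?_
      · intro v _; simp [hf, if_neg (hw v)]
      · obtain ⟨v, hv⟩ := T.levelSet_nonempty hq n
        have := T.abs_le_Minf (f ∘ phi) v
        rw [hv] at this
        calc (0 : ℝ) ≤ ‖(f ∘ phi) v‖ := norm_nonneg _
        _ ≤ _ := this
    have hz : T.normTinf (f ∘ phi) = 0 := by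
      unfold HomTree.normTinf
      simp [hMz]
    have h1 : (1 : ℝ) ≤ T.normTinf f := by
      have h1' : (1 : ℝ) ≤ T.Minf (T.level w) f := by
        have := T.abs_le_Minf f w
        simpa [hf] using this
      exact h1'.trans (le_ciSup hmemf (T.level w))
    rw [hnorm f hmemf] at hz
    linarith
  · intro hs
    have key : ∀ f : T.V → ℂ, T.memTinf f →
        T.memTinf (f ∘ phi) ∧ T.normTinf (f ∘ phi) = T.normTinf f := by
      intro f hf
      have hA : ∀ n, T.Minf n (f ∘ phi) ≤ T.normTinf f := by
        intro n
        apply T.Minf_le hq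
        intro v _
        calc ‖(f ∘ phi) v‖ ≤ T.Minf (T.level (phi v)) f :=
              T.abs_le_Minf f (phi v)
          _ ≤ T.normTinf f := le_ciSup hf _
      have hmem : T.memTinf (f ∘ phi) := ⟨T.normTinf f, by rintro x ⟨n, rfl⟩; exact hA n⟩
      refine ⟨hmem, le_antisymm (ciSup_le hA) ?_⟩
      apply ciSup_le
      intro n
      apply T.Minf_le hq
      intro w hw
      obtain ⟨v, rfl⟩ := hs w
      calc ‖f (phi v)‖ = ‖(f ∘ phi) v‖ := rfl
        _ ≤ T.Minf (T.level v) (f ∘ phi) := T.abs_le_Minf (f ∘ phi) v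
        _ ≤ T.normTinf (f ∘ phi) := le_ciSup hmem _
    exact ⟨fun f hf => (key f hf).1, fun f hf => (key f hf).2⟩
end
end

section
/- Let T be the 2-homogeneous rooted tree (q = 1), let φ be a self-map of T and let 1 ≤ p < ∞. Then C_φ is an isometry on T_p (i.e. ‖f ∘ φ‖_p = ‖f‖_p for all f ∈ T_p) if and only if all of the following hold: (1) φ(o) = o; (2) φ is surjective; (3) |φ(v)| = |φ(w)| whenever |v| = |w|; (4) whenever φ(w) ≠ o for some w ∈ T, the restriction of φ to D_{|w|} is injective. -/
open scoped BigOperators Classical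

noncomputable section

section Aux

variable {T : HomTree 1} {p : ℝ}

lemma aux_mem_lf {v : T.V} {n : ℕ} : v ∈ T.levelFinset n ↔ T.level v = n := by
  simp [HomTree.levelFinset, Set.Finite.mem_toFinset]

lemma aux_card_lf (n : ℕ) : (T.levelFinset n).card = treeC 1 n := T.card_level n

lemma aux_lf_zero : T.levelFinset 0 = {T.root} := by
  have h1 : (T.levelFinset 0).card = 1 := by
    show (T.finiteLevel 0).toFinset.card = 1
    rw [T.card_level 0]; simp [treeC]
  obtain ⟨a, ha⟩ := Finset.card_eq_one.1 h1
  have hr : T.root ∈ T.levelFinset 0 :=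
    aux_mem_lf.2 ((T.level_eq_zero_iff T.root).2 rfl)
  rw [ha] at hr ⊢
  simp only [Finset.mem_singleton] at hr
  rw [hr]

lemma aux_treeC_two {n : ℕ} (hn : n ≠ 0) : treeC 1 n = 2 := by
  simp [treeC, hn]

lemma aux_lf_pair {n : ℕ} (hn : n ≠ 0) :
    ∃ v₁ v₂ : T.V, v₁ ≠ v₂ ∧ T.levelFinset n = {v₁, v₂} := by
  have h2 : (T.levelFinset n).card = 2 := by
    rw [aux_card_lf n, aux_treeC_two hn]
  exact Finset.card_eq_two.1 h2

lemma aux_exists_level (n : ℕ) : ∃ v : T.V, T.level v = n := by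
  have h : 0 < (T.levelFinset n).card := by
    rw [aux_card_lf n]
    unfold treeC; split <;> norm_num
  obtain ⟨v, hv⟩ := Finset.card_pos.1 h
  exact ⟨v, aux_mem_lf.1 hv⟩

lemma aux_level_of_pair {n : ℕ} {v₁ v₂ : T.V} (hpair : T.levelFinset n = {v₁, v₂}) :
    T.level v₁ = n ∧ T.level v₂ = n := by
  constructor
  · exact aux_mem_lf.1 (by rw [hpair]; simp)
  · exact aux_mem_lf.1 (by rw [hpair]; simp)

lemma aux_pair_eq {n : ℕ} {v₁ v₂ : T.V} (hne : v₁ ≠ v₂)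
    (h₁ : T.level v₁ = n) (h₂ : T.level v₂ = n) :
    n ≠ 0 ∧ T.levelFinset n = {v₁, v₂} := by
  have hn : n ≠ 0 := by
    intro h0
    apply hne
    rw [(T.level_eq_zero_iff v₁).1 (h₁.trans h0), (T.level_eq_zero_iff v₂).1 (h₂.trans h0)]
  refine ⟨hn, ?_⟩
  have hsub : ({v₁, v₂} : Finset T.V) ⊆ T.levelFinset n := by
    intro u hu
    rcases Finset.mem_insert.1 hu with h | h
    · exact aux_mem_lf.2 (h ▸ h₁)
    · exact aux_mem_lf.2 ((Finset.mem_singleton.1 h) ▸ h₂)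
  exact (Finset.eq_of_subset_of_card_le hsub
    (by rw [aux_card_lf n, aux_treeC_two hn, Finset.card_pair hne])).symm

lemma aux_Mp_zero (hp : 0 < p) (f : T.V → ℂ) :
    T.Mp p 0 f = ‖f T.root‖ := by
  unfold HomTree.Mp
  rw [aux_lf_zero, Finset.sum_singleton]
  have h1 : (treeC 1 0 : ℝ) = 1 := by simp [treeC]
  rw [h1, one_div_one, one_mul, one_div,
    Real.rpow_rpow_inv (norm_nonneg _) hp.ne']

lemma aux_Mp_pair {n : ℕ} (hn : n ≠ 0) {v₁ v₂ : T.V}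
    (hpair : T.levelFinset n = {v₁, v₂}) (hne : v₁ ≠ v₂) (f : T.V → ℂ) :
    T.Mp p n f = ((‖f v₁‖ ^ p + ‖f v₂‖ ^ p) / 2) ^ (1 / p) := by
  unfold HomTree.Mp
  rw [hpair, Finset.sum_pair hne]
  have h2 : (treeC 1 n : ℝ) = 2 := by rw [aux_treeC_two hn]; norm_num
  rw [h2]
  congr 1
  ring

lemma aux_Mp_le (hp : 0 < p) {C : ℝ} (hC : 0 ≤ C) {n : ℕ} (f : T.V → ℂ)
    (h : ∀ v ∈ T.levelFinset n, ‖f v‖ ≤ C) : T.Mp p n f ≤ C := by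
  have hcpos : (0:ℝ) < (treeC 1 n : ℝ) := by
    have : 0 < treeC 1 n := by unfold treeC; split <;> norm_num
    exact_mod_cast this
  have hsum : ∑ v ∈ T.levelFinset n, ‖f v‖ ^ p ≤ (treeC 1 n : ℝ) * C ^ p := by
    calc ∑ v ∈ T.levelFinset n, ‖f v‖ ^ p
        ≤ (T.levelFinset n).card • (C ^ p) :=
          Finset.sum_le_card_nsmul _ _ _ (fun v hv =>
            Real.rpow_le_rpow (norm_nonneg _) (h v hv) hp.le)
      _ = (treeC 1 n : ℝ) * C ^ p := by
          rw [aux_card_lf n, nsmul_eq_mul]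
  have hinner : 1 / (treeC 1 n : ℝ) * ∑ v ∈ T.levelFinset n, ‖f v‖ ^ p ≤ C ^ p := by
    rw [one_div, inv_mul_le_iff₀ hcpos]
    exact hsum
  have hinner0 : 0 ≤ 1 / (treeC 1 n : ℝ) * ∑ v ∈ T.levelFinset n, ‖f v‖ ^ p := by
    apply mul_nonneg (by positivity)
    exact Finset.sum_nonneg fun v _ => Real.rpow_nonneg (norm_nonneg _) _
  calc T.Mp p n f ≤ (C ^ p) ^ (1 / p) :=
        Real.rpow_le_rpow hinner0 hinner (by positivity)
    _ = C := by rw [one_div, Real.rpow_rpow_inv hC hp.ne']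

lemma aux_Mp_zero_level (hp : 0 < p) {n : ℕ} (f : T.V → ℂ)
    (h : ∀ v ∈ T.levelFinset n, f v = 0) : T.Mp p n f = 0 := by
  have hsum : ∑ v ∈ T.levelFinset n, ‖f v‖ ^ p = 0 :=
    Finset.sum_eq_zero fun v hv => by rw [h v hv, norm_zero, Real.zero_rpow hp.ne']
  unfold HomTree.Mp
  rw [hsum, mul_zero, Real.zero_rpow (one_div_ne_zero hp.ne')]

lemma aux_memTp_of_bdd (hp : 0 < p) {C : ℝ} (hC : 0 ≤ C) {f : T.V → ℂ}
    (h : ∀ v, ‖f v‖ ≤ C) : T.memTp p f := by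
  refine ⟨C, ?_⟩
  rintro x ⟨n, rfl⟩
  exact aux_Mp_le hp hC f fun v _ => h v

/-- `M_p` of a function supported at a single point `w` of a nonzero level. -/
lemma aux_Mp_single (hp : 0 < p) {m : ℕ} (hm : m ≠ 0) {w : T.V} (hw : T.level w = m)
    {c : ℝ} (f : T.V → ℂ) (hfw : ‖f w‖ = c)
    (h0 : ∀ u, T.level u = m → u ≠ w → f u = 0) :
    T.Mp p m f = (c ^ p / 2) ^ (1 / p) := by
  obtain ⟨v₁, v₂, hne, hpair⟩ := aux_lf_pair (T := T) hm
  obtain ⟨hl₁, hl₂⟩ := aux_level_of_pair hpair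
  have hwmem : w ∈ ({v₁, v₂} : Finset T.V) := by
    rw [← hpair]; exact aux_mem_lf.2 hw
  rw [aux_Mp_pair hm hpair hne f]
  rcases Finset.mem_insert.1 hwmem with h | h
  · subst h
    rw [hfw, h0 v₂ hl₂ (fun h => hne h.symm), norm_zero, Real.zero_rpow hp.ne', add_zero]
  · rw [Finset.mem_singleton] at h
    subst h
    rw [hfw, h0 v₁ hl₁ hne, norm_zero, Real.zero_rpow hp.ne', zero_add]

/-- The basic contradiction scheme for the forward direction. -/
lemma aux_forward_contra {phi : T.V → T.V}
    (hmem : ∀ f : T.V → ℂ, T.memTp p f → T.memTp p (f ∘ phi))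
    (hiso : ∀ f : T.V → ℂ, T.memTp p f → T.normTp p (f ∘ phi) = T.normTp p f)
    (f : T.V → ℂ) (hf : T.memTp p f) (M : ℝ)
    (hfle : ∀ n, T.Mp p n f ≤ M) (n : ℕ) (hgt : M < T.Mp p n (f ∘ phi)) : False := by
  have h1 : T.normTp p f ≤ M := ciSup_le hfle
  have h2 : T.Mp p n (f ∘ phi) ≤ T.normTp p (f ∘ phi) := le_ciSup (hmem f hf) n
  have h3 := hiso f hf
  unfold HomTree.normTp at h1 h2 h3
  linarith

section Aux2

variable {T : HomTree 1} {p : ℝ}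

/-- Facts about the indicator of a single vertex at a nonzero level. -/
lemma aux_ind_facts (hp0 : 0 < p) {w : T.V} (hw : T.level w ≠ 0) :
    T.memTp p (fun u => if u = w then (1:ℂ) else 0) ∧
    (∀ k, T.Mp p k (fun u => if u = w then (1:ℂ) else 0) ≤ ((1:ℝ)/2) ^ (1/p)) ∧
    T.Mp p (T.level w) (fun u => if u = w then (1:ℂ) else 0) = ((1:ℝ)/2) ^ (1/p) := by
  set f : T.V → ℂ := fun u => if u = w then 1 else 0 with hf
  have habs : ∀ u, ‖f u‖ ≤ 1 := by
    intro u; simp only [hf]; split <;> simp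
  have heq : T.Mp p (T.level w) f = ((1:ℝ)/2) ^ (1/p) := by
    have h := aux_Mp_single (c := 1) hp0 hw rfl f (by simp [hf])
      (fun u _ hu => by simp only [hf]; rw [if_neg hu])
    rwa [Real.one_rpow] at h
  refine ⟨aux_memTp_of_bdd hp0 zero_le_one habs, ?_, heq⟩
  intro k
  by_cases hk : k = T.level w
  · rw [hk, heq]
  · have h0 : T.Mp p k f = 0 := by
      apply aux_Mp_zero_level hp0
      intro v hv
      have hvk : T.level v = k := aux_mem_lf.1 hv
      simp only [hf]
      rw [if_neg (fun h => hk (by rw [← hvk, h]))]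
    rw [h0]
    exact Real.rpow_nonneg (by norm_num) _

/-- The key level-by-level identity for the backward direction. -/
lemma aux_R (hp : 0 < p) {phi : T.V → T.V}
    (h1 : phi T.root = T.root)
    (h3 : ∀ v w : T.V, T.level v = T.level w → T.level (phi v) = T.level (phi w))
    (h4 : ∀ w : T.V, phi w ≠ T.root →
        ∀ v₁ v₂ : T.V, T.level v₁ = T.level w → T.level v₂ = T.level w →
          phi v₁ = phi v₂ → v₁ = v₂)
    (v : T.V) (f : T.V → ℂ) :
    T.Mp p (T.level v) (f ∘ phi) = T.Mp p (T.level (phi v)) f := by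
  by_cases hv : T.level v = 0
  · have hvr : v = T.root := (T.level_eq_zero_iff v).1 hv
    subst hvr
    rw [hv, h1, (T.level_eq_zero_iff T.root).2 rfl, aux_Mp_zero hp, aux_Mp_zero hp,
      Function.comp_apply, h1]
  · obtain ⟨v₁, v₂, hne, hpair⟩ := aux_lf_pair (T := T) hv
    obtain ⟨hl₁, hl₂⟩ := aux_level_of_pair hpair
    have hφ₁ : T.level (phi v₁) = T.level (phi v) := h3 v₁ v hl₁
    have hφ₂ : T.level (phi v₂) = T.level (phi v) := h3 v₂ v hl₂
    rw [aux_Mp_pair hv hpair hne (f ∘ phi)]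
    by_cases hm : T.level (phi v) = 0
    · have hr₁ : phi v₁ = T.root := (T.level_eq_zero_iff _).1 (hφ₁.trans hm)
      have hr₂ : phi v₂ = T.root := (T.level_eq_zero_iff _).1 (hφ₂.trans hm)
      rw [hm, aux_Mp_zero hp]
      simp only [Function.comp_apply, hr₁, hr₂]
      have h2 : (‖f T.root‖ ^ p + ‖f T.root‖ ^ p) / 2
          = ‖f T.root‖ ^ p := by ring
      rw [h2, one_div, Real.rpow_rpow_inv (norm_nonneg _) hp.ne']
    · have hφ₁ne : phi v₁ ≠ T.root := fun h =>
        hm (by rw [← hφ₁, (T.level_eq_zero_iff _).2 h])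
      have hppne : phi v₁ ≠ phi v₂ := fun h =>
        hne (h4 v₁ hφ₁ne v₁ v₂ rfl (hl₂.trans hl₁.symm) h)
      have hpairEq : T.levelFinset (T.level (phi v)) = {phi v₁, phi v₂} :=
        (aux_pair_eq hppne hφ₁ hφ₂).2
      rw [aux_Mp_pair hm hpairEq hppne f]
      simp only [Function.comp_apply]

/-- The backward direction. -/
lemma aux_backward (hp : 0 < p) {phi : T.V → T.V}
    (h1 : phi T.root = T.root) (h2 : Function.Surjective phi)
    (h3 : ∀ v w : T.V, T.level v = T.level w → T.level (phi v) = T.level (phi w))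
    (h4 : ∀ w : T.V, phi w ≠ T.root →
        ∀ v₁ v₂ : T.V, T.level v₁ = T.level w → T.level v₂ = T.level w →
          phi v₁ = phi v₂ → v₁ = v₂) :
    (∀ f : T.V → ℂ, T.memTp p f → T.memTp p (f ∘ phi)) ∧
    (∀ f : T.V → ℂ, T.memTp p f → T.normTp p (f ∘ phi) = T.normTp p f) := by
  have key : ∀ (f : T.V → ℂ) (n : ℕ), ∃ m, T.Mp p n (f ∘ phi) = T.Mp p m f := by
    intro f n
    obtain ⟨v, hv⟩ := aux_exists_level (T := T) n
    exact ⟨T.level (phi v), by rw [← hv, aux_R hp h1 h3 h4]⟩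
  have hmem : ∀ f : T.V → ℂ, T.memTp p f → T.memTp p (f ∘ phi) := by
    rintro f ⟨C, hC⟩
    refine ⟨C, ?_⟩
    rintro x ⟨n, rfl⟩
    obtain ⟨m, hm⟩ := key f n
    simp only
    rw [hm]
    exact hC ⟨m, rfl⟩
  refine ⟨hmem, fun f hf => ?_⟩
  unfold HomTree.normTp
  apply le_antisymm
  · apply ciSup_le
    intro n
    obtain ⟨m, hm⟩ := key f n
    rw [hm]
    exact le_ciSup hf m
  · apply ciSup_le
    intro m
    obtain ⟨w, hw⟩ := aux_exists_level (T := T) m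
    obtain ⟨v, hv⟩ := h2 w
    have heq : T.Mp p m f = T.Mp p (T.level v) (f ∘ phi) := by
      rw [aux_R hp h1 h3 h4, hv, hw]
    rw [heq]
    exact le_ciSup (hmem f hf) (T.level v)

/-- Forward direction, mixed case: one image at the root, the other not. -/
lemma aux_mixed (hp : 1 ≤ p) {phi : T.V → T.V}
    (hmem : ∀ f : T.V → ℂ, T.memTp p f → T.memTp p (f ∘ phi))
    (hiso : ∀ f : T.V → ℂ, T.memTp p f → T.normTp p (f ∘ phi) = T.normTp p f)
    {n : ℕ} (hn0 : n ≠ 0) {v w : T.V}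
    (hpair : T.levelFinset n = {v, w}) (hvw : v ≠ w)
    (ha : T.level (phi v) = 0) (hb : T.level (phi w) ≠ 0) : False := by
  have hp0 : 0 < p := lt_of_lt_of_le one_pos hp
  have har : phi v = T.root := (T.level_eq_zero_iff _).1 ha
  set b := phi w with hbdef
  set t : ℝ := (2:ℝ) ^ (1/p) with ht
  have ht0 : (0:ℝ) ≤ t := Real.rpow_nonneg (by norm_num) _
  have ht1 : (1:ℝ) ≤ t := Real.one_le_rpow (by norm_num) (by positivity)
  have htp : t ^ p = 2 := by
    rw [ht, one_div]; exact Real.rpow_inv_rpow (by norm_num) hp0.ne'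
  set f : T.V → ℂ := fun u => if u = b then (t:ℂ) else if u = T.root then 1 else 0 with hfdef
  have hbr : b ≠ T.root := fun h => hb (h ▸ (T.level_eq_zero_iff b).2 h)
  have habsb : ‖f b‖ = t := by
    simp only [hfdef, if_pos rfl]
    rw [Complex.norm_real, Real.norm_of_nonneg ht0]
  have habsr : ‖f T.root‖ = 1 := by
    simp only [hfdef]
    rw [if_neg (fun h => hbr h.symm)]
    simp
  have hmemf : T.memTp p f := by
    apply aux_memTp_of_bdd hp0 ht0
    intro u
    simp only [hfdef]
    split
    · rw [Complex.norm_real, Real.norm_of_nonneg ht0]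
    · split
      · rw [norm_one]; exact ht1
      · rw [norm_zero]; exact ht0
  have hle : ∀ k, T.Mp p k f ≤ 1 := by
    intro k
    by_cases hkb : k = T.level b
    · subst hkb
      have h := aux_Mp_single hp0 hb rfl f habsb ?_
      · rw [h, htp]
        have h2 : (2:ℝ)/2 = 1 := by norm_num
        rw [h2, Real.one_rpow]
      · intro u hu hub
        have hur : u ≠ T.root := fun h => hb (by rw [← hu, h, (T.level_eq_zero_iff T.root).2 rfl])
        simp only [hfdef]
        rw [if_neg hub, if_neg hur]
    · apply aux_Mp_le hp0 zero_le_one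
      intro u hu
      have hub : u ≠ b := fun h => hkb (by rw [← aux_mem_lf.1 hu, h])
      simp only [hfdef]
      rw [if_neg hub]
      split
      · rw [norm_one]
      · rw [norm_zero]; exact zero_le_one
  apply aux_forward_contra hmem hiso f hmemf 1 hle n
  rw [aux_Mp_pair hn0 hpair hvw]
  simp only [Function.comp_apply, har]
  rw [habsr, habsb, Real.one_rpow, htp]
  have h3 : ((1:ℝ) + 2)/2 = 3/2 := by norm_num
  rw [h3]
  exact (Real.one_lt_rpow_iff_of_pos (by norm_num)).2 (Or.inl ⟨by norm_num, by positivity⟩)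

/-- Forward direction, case of two images at distinct nonzero levels. -/
lemma aux_both (hp : 1 ≤ p) {phi : T.V → T.V}
    (hmem : ∀ f : T.V → ℂ, T.memTp p f → T.memTp p (f ∘ phi))
    (hiso : ∀ f : T.V → ℂ, T.memTp p f → T.normTp p (f ∘ phi) = T.normTp p f)
    {n : ℕ} (hn0 : n ≠ 0) {v w : T.V}
    (hpair : T.levelFinset n = {v, w}) (hvw : v ≠ w)
    (ha : T.level (phi v) ≠ 0) (hb : T.level (phi w) ≠ 0)
    (hab : T.level (phi v) ≠ T.level (phi w)) : False := by
  have hp0 : 0 < p := lt_of_lt_of_le one_pos hp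
  have hA1 : ((1:ℝ)/2) ^ (1/p) < 1 :=
    Real.rpow_lt_one (by norm_num) (by norm_num) (by positivity)
  set a := phi v with hadef
  set b := phi w with hbdef
  set f : T.V → ℂ := fun u => if u = a then 1 else if u = b then 1 else 0 with hfdef
  have habs : ∀ u, ‖f u‖ ≤ 1 := by
    intro u; simp only [hfdef]; split
    · rw [norm_one]
    · split
      · rw [norm_one]
      · rw [norm_zero]; exact zero_le_one
  have hmemf : T.memTp p f := aux_memTp_of_bdd hp0 zero_le_one habs
  have hfa : ‖f a‖ = 1 := by simp only [hfdef, if_pos rfl, norm_one]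
  have hfb : ‖f b‖ = 1 := by
    by_cases h : b = a <;> simp [hfdef, h]
  have hle : ∀ k, T.Mp p k f ≤ ((1:ℝ)/2) ^ (1/p) := by
    intro k
    by_cases hka : k = T.level a
    · subst hka
      have h := aux_Mp_single hp0 ha rfl f hfa ?_
      · rw [h, Real.one_rpow]
      · intro u hu hua
        have hubb : u ≠ b := fun h => hab (by rw [← hu, h])
        simp only [hfdef]
        rw [if_neg hua, if_neg hubb]
    · by_cases hkb : k = T.level b
      · subst hkb
        have h := aux_Mp_single hp0 hb rfl f hfb ?_
        · rw [h, Real.one_rpow]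
        · intro u hu hub
          have huaa : u ≠ a := fun h => hab (by rw [← h, hu])
          simp only [hfdef]
          rw [if_neg huaa, if_neg hub]
      · have h0 : T.Mp p k f = 0 := by
          apply aux_Mp_zero_level hp0
          intro u hu
          have hul : T.level u = k := aux_mem_lf.1 hu
          have hua : u ≠ a := fun h => hka (by rw [← hul, h])
          have hub : u ≠ b := fun h => hkb (by rw [← hul, h])
          simp only [hfdef]
          rw [if_neg hua, if_neg hub]
        rw [h0]
        exact Real.rpow_nonneg (by norm_num) _
  apply aux_forward_contra hmem hiso f hmemf (((1:ℝ)/2) ^ (1/p)) hle n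
  rw [aux_Mp_pair hn0 hpair hvw]
  simp only [Function.comp_apply]
  rw [show ‖f (phi v)‖ = 1 from hfa, show ‖f (phi w)‖ = 1 from hfb,
    Real.one_rpow]
  have h2 : ((1:ℝ) + 1)/2 = 1 := by norm_num
  rw [h2, Real.one_rpow]
  exact hA1

end Aux2

/-- On the 2-homogeneous tree (`1 ≤ p < ∞`), `C_φ` is an isometry on `T_p` iff:
(1) `φ o = o`; (2) `φ` is surjective; (3) `|φ v| = |φ w|` whenever `|v| = |w|`;
(4) if `φ w ≠ o` then `φ` is injective on `D_{|w|}`. -/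
theorem isometry_comp_Tp_iff_two_homogeneous (T : HomTree 1) (p : ℝ) (hp : 1 ≤ p)
    (phi : T.V → T.V) :
    ((∀ f : T.V → ℂ, T.memTp p f → T.memTp p (f ∘ phi)) ∧
      (∀ f : T.V → ℂ, T.memTp p f → T.normTp p (f ∘ phi) = T.normTp p f)) ↔
    (phi T.root = T.root ∧
      Function.Surjective phi ∧
      (∀ v w : T.V, T.level v = T.level w → T.level (phi v) = T.level (phi w)) ∧
      (∀ w : T.V, phi w ≠ T.root →
        ∀ v₁ v₂ : T.V, T.level v₁ = T.level w → T.level v₂ = T.level w →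
          phi v₁ = phi v₂ → v₁ = v₂)) := by
  constructor
  · rintro ⟨hmem, hiso⟩
    have hp0 : 0 < p := lt_of_lt_of_le one_pos hp
    have hA1 : ((1:ℝ)/2) ^ (1/p) < 1 :=
      Real.rpow_lt_one (by norm_num) (by norm_num) (by positivity)
    have hroot : phi T.root = T.root := by
      by_contra hro
      have hw : T.level (phi T.root) ≠ 0 := fun h => hro ((T.level_eq_zero_iff _).1 h)
      obtain ⟨hmemf, hle, _⟩ := aux_ind_facts hp0 hw
      apply aux_forward_contra hmem hiso _ hmemf _ hle 0
      rw [aux_Mp_zero hp0]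
      have h1 : ‖((fun u => if u = phi T.root then (1:ℂ) else 0) ∘ phi) T.root‖
          = 1 := by simp
      rw [h1]
      exact hA1
    have hinj : ∀ v₁ v₂ : T.V, T.level v₁ = T.level v₂ → phi v₁ = phi v₂ →
        phi v₁ ≠ T.root → v₁ = v₂ := by
      intro v₁ v₂ hlv hfe hnr
      by_contra hne
      have hw : T.level (phi v₁) ≠ 0 := fun h => hnr ((T.level_eq_zero_iff _).1 h)
      obtain ⟨hmemf, hle, _⟩ := aux_ind_facts hp0 hw
      obtain ⟨hn0, hpair⟩ := aux_pair_eq hne rfl hlv.symm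
      apply aux_forward_contra hmem hiso _ hmemf _ hle (T.level v₁)
      rw [aux_Mp_pair hn0 hpair hne]
      have e1 : ‖((fun u => if u = phi v₁ then (1:ℂ) else 0) ∘ phi) v₁‖ = 1 := by
        simp
      have e2 : ‖((fun u => if u = phi v₁ then (1:ℂ) else 0) ∘ phi) v₂‖ = 1 := by
        simp only [Function.comp_apply]
        rw [if_pos hfe.symm, norm_one]
      rw [e1, e2, Real.one_rpow]
      have h2 : ((1:ℝ) + 1)/2 = 1 := by norm_num
      rw [h2, Real.one_rpow]
      exact hA1
    have hsurj : Function.Surjective phi := by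
      intro w
      by_cases hwr : T.level w = 0
      · exact ⟨T.root, by rw [hroot, ← (T.level_eq_zero_iff w).1 hwr]⟩
      · by_contra hns
        push_neg at hns
        obtain ⟨hmemf, hle, heqA⟩ := aux_ind_facts hp0 hwr
        have hzero : ∀ k, T.Mp p k ((fun u => if u = w then (1:ℂ) else 0) ∘ phi) = 0 := by
          intro k
          apply aux_Mp_zero_level hp0
          intro v _
          simp only [Function.comp_apply]
          rw [if_neg (hns v)]
        have h0 : T.normTp p ((fun u => if u = w then (1:ℂ) else 0) ∘ phi) = 0 := by
          unfold HomTree.normTp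
          simp only [hzero, ciSup_const]
        have hge : ((1:ℝ)/2) ^ (1/p) ≤ T.normTp p (fun u => if u = w then (1:ℂ) else 0) := by
          rw [← heqA]
          exact le_ciSup hmemf (T.level w)
        have hiso' := hiso _ hmemf
        rw [h0] at hiso'
        have hApos : (0:ℝ) < ((1:ℝ)/2) ^ (1/p) := Real.rpow_pos_of_pos (by norm_num) _
        linarith
    have hlev : ∀ v w : T.V, T.level v = T.level w → T.level (phi v) = T.level (phi w) := by
      intro v w hlvw
      by_cases hvw : v = w
      · rw [hvw]
      · obtain ⟨hn0, hpair⟩ := aux_pair_eq hvw hlvw rfl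
        by_contra hab
        by_cases ha0 : T.level (phi v) = 0
        · by_cases hb0 : T.level (phi w) = 0
          · exact hab (ha0.trans hb0.symm)
          · exact aux_mixed hp hmem hiso hn0 hpair hvw ha0 hb0
        · by_cases hb0 : T.level (phi w) = 0
          · exact aux_mixed hp hmem hiso hn0
              (by rw [hpair]; exact Finset.pair_comm v w)
              (fun h => hvw h.symm) hb0 ha0
          · exact aux_both hp hmem hiso hn0 hpair hvw ha0 hb0 hab
    refine ⟨hroot, hsurj, hlev, ?_⟩
    intro w hw v₁ v₂ h₁ h₂ hfe
    by_cases hlw : T.level w = 0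
    · rw [(T.level_eq_zero_iff v₁).1 (h₁.trans hlw), (T.level_eq_zero_iff v₂).1 (h₂.trans hlw)]
    · by_cases hvv : v₁ = v₂
      · exact hvv
      · obtain ⟨hn0, hpair⟩ := aux_pair_eq hvv h₁ h₂
        have hwmem : w ∈ ({v₁, v₂} : Finset T.V) := by
          rw [← hpair]; exact aux_mem_lf.2 rfl
        have hphi1 : phi v₁ ≠ T.root := by
          rcases Finset.mem_insert.1 hwmem with h | h
          · rw [← h]; exact hw
          · rw [Finset.mem_singleton] at h
            rw [hfe, ← h]; exact hw
        exact hinj v₁ v₂ (h₁.trans h₂.symm) hfe hphi1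
  · rintro ⟨h1, h2, h3, h4⟩
    exact aux_backward (lt_of_lt_of_le one_pos hp) h1 h2 h3 h4
end Aux
end
end

section
/- Let T be the (q+1)-homogeneous rooted tree with q ≥ 2, let φ be a self-map of T, let 1 ≤ p < ∞, and write λ_{k,n} = c_k N_{k,n} / c_n. Then C_φ is an isometry on T_p (i.e. ‖f ∘ φ‖_p = ‖f‖_p for all f ∈ T_p) if and only if all of the following hold: (1) |φ(v)| ≤ |v| for all v ∈ T (in particular φ(o) = o); (2) Σ_{k=0}^n λ_{k,n} = 1 for all n ≥ 0; (3) for every k ≥ 0 and n ≥ 0, N_φ(n,w) = N_{k,n} for every w with |w| = k; (4) sup_{n ≥ 0} λ_{k,n} = 1 for every k ≥ 0 (in particular φ is surjective). -/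
open scoped BigOperators Classical

noncomputable section

section Aux

variable {q : ℕ} {T : HomTree q} {p : ℝ}

lemma treeC_pos (hq : 2 ≤ q) (n : ℕ) : 0 < treeC q n := by
  unfold treeC; split
  · norm_num
  · positivity

lemma treeC_cast_pos (hq : 2 ≤ q) (n : ℕ) : (0:ℝ) < (treeC q n : ℝ) := by
  exact_mod_cast treeC_pos hq n

lemma treeC_strictMono (hq : 2 ≤ q) {m k : ℕ} (h : m < k) : treeC q m < treeC q k := by
  have hk : k ≠ 0 := by omega
  rcases Nat.eq_zero_or_pos m with hm | hm
  · subst hm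
    unfold treeC
    rw [if_pos rfl, if_neg hk]
    calc 1 < (q+1) * 1 := by omega
    _ ≤ (q+1) * q ^ (k-1) := Nat.mul_le_mul_left _ (Nat.one_le_pow _ _ (by omega))
  · unfold treeC
    rw [if_neg (by omega), if_neg hk]
    have : q ^ (m-1) < q ^ (k-1) := Nat.pow_lt_pow_right (by omega) (by omega)
    have h2 : 0 < q + 1 := by omega
    exact (Nat.mul_lt_mul_left h2).mpr this

lemma mem_levelFinset {n : ℕ} {v : T.V} : v ∈ T.levelFinset n ↔ T.level v = n :=
  Set.Finite.mem_toFinset _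

lemma card_levelFinset (n : ℕ) : (T.levelFinset n).card = treeC q n := T.card_level n

lemma levelFinset_nonempty (hq : 2 ≤ q) (n : ℕ) : (T.levelFinset n).Nonempty := by
  rw [← Finset.card_pos, card_levelFinset]; exact treeC_pos hq n

lemma level_pairwiseDisjoint (s : Finset ℕ) :
    (↑s : Set ℕ).PairwiseDisjoint (fun k => T.levelFinset k) := by
  intro i _ j _ hij
  refine Finset.disjoint_left.mpr fun v hvi hvj => hij ?_
  rw [← mem_levelFinset.mp hvi, mem_levelFinset.mp hvj]

lemma rpow_oneDiv_rpow (hp : 0 < p) {x : ℝ} (hx : 0 ≤ x) : (x ^ (1/p)) ^ p = x := by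
  rw [← Real.rpow_mul hx, one_div_mul_cancel hp.ne', Real.rpow_one]

lemma rpow_rpow_oneDiv (hp : 0 < p) {x : ℝ} (hx : 0 ≤ x) : (x ^ p) ^ (1/p) = x := by
  rw [← Real.rpow_mul hx, mul_one_div_cancel hp.ne', Real.rpow_one]

lemma le_of_rpow_le (hp : 0 < p) {x y : ℝ} (hx : 0 ≤ x) (hy : 0 ≤ y)
    (h : x ^ (1/p) ≤ y ^ (1/p)) : x ≤ y := by
  have := Real.rpow_le_rpow (Real.rpow_nonneg hx _) h hp.le
  rwa [rpow_oneDiv_rpow hp hx, rpow_oneDiv_rpow hp hy] at this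

lemma sum_abs_nonneg (f : T.V → ℂ) (n : ℕ) :
    0 ≤ ∑ v ∈ T.levelFinset n, ‖f v‖ ^ p :=
  Finset.sum_nonneg fun v _ => Real.rpow_nonneg (norm_nonneg _) p

lemma Mp_nonneg (n : ℕ) (f : T.V → ℂ) : 0 ≤ T.Mp p n f :=
  Real.rpow_nonneg (mul_nonneg (by positivity) (sum_abs_nonneg f n)) _

lemma Mp_rpow (hp : 0 < p) (hq : 2 ≤ q) (n : ℕ) (f : T.V → ℂ) :
    T.Mp p n f ^ p = (1 / (treeC q n : ℝ)) * ∑ v ∈ T.levelFinset n, ‖f v‖ ^ p :=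
  rpow_oneDiv_rpow hp (mul_nonneg (by positivity) (sum_abs_nonneg f n))

lemma sum_comp_fiber (phi : T.V → T.V) {n : ℕ} {t : Finset T.V}
    (hmaps : ∀ v ∈ T.levelFinset n, phi v ∈ t) (g : T.V → ℝ) :
    ∑ v ∈ T.levelFinset n, g (phi v) = ∑ w ∈ t, (T.Nphi phi n w : ℝ) * g w := by
  rw [← Finset.sum_fiberwise_of_maps_to hmaps (fun v => g (phi v))]
  refine Finset.sum_congr rfl fun w _ => ?_
  have h1 : ∀ v ∈ (T.levelFinset n).filter (fun v => phi v = w), g (phi v) = g w :=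
    fun v hv => by rw [(Finset.mem_filter.mp hv).2]
  rw [Finset.sum_congr rfl h1, Finset.sum_const, HomTree.Nphi, nsmul_eq_mul]


/-- The test function `δ_w`. -/
def tdelta {q : ℕ} (T : HomTree q) (w : T.V) : T.V → ℂ := fun v => if v = w then 1 else 0

lemma abs_tdelta_rpow (hp : 0 < p) (w v : T.V) :
    ‖tdelta T w v‖ ^ p = if v = w then (1:ℝ) else 0 := by
  unfold tdelta
  split
  · simp
  · simp [Real.zero_rpow hp.ne']

lemma Mp_tdelta (hp : 0 < p) (w : T.V) (n : ℕ) :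
    T.Mp p n (tdelta T w) =
      if n = T.level w then (1 / (treeC q n : ℝ)) ^ (1/p) else 0 := by
  unfold HomTree.Mp
  have hs : ∑ v ∈ T.levelFinset n, ‖tdelta T w v‖ ^ p
      = if T.level w = n then (1:ℝ) else 0 := by
    rw [Finset.sum_congr rfl fun v _ => abs_tdelta_rpow hp w v,
      Finset.sum_ite_eq' (T.levelFinset n) w (fun _ => (1:ℝ))]
    by_cases h : T.level w = n
    · rw [if_pos (mem_levelFinset.mpr h), if_pos h]
    · rw [if_neg (fun hh => h (mem_levelFinset.mp hh)), if_neg h]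
  rw [hs]
  by_cases h : T.level w = n
  · rw [if_pos h, if_pos h.symm, mul_one]
  · rw [if_neg h, if_neg (fun hh => h hh.symm), mul_zero,
      Real.zero_rpow (by positivity)]

lemma Mp_tdelta_le (hp : 0 < p) (hq : 2 ≤ q) (w : T.V) (n : ℕ) :
    T.Mp p n (tdelta T w) ≤ (1 / (treeC q (T.level w) : ℝ)) ^ (1/p) := by
  rw [Mp_tdelta hp]
  split
  · next h => subst h; exact le_refl _
  · exact Real.rpow_nonneg (by positivity) _

lemma memTp_tdelta (hp : 0 < p) (hq : 2 ≤ q) (w : T.V) : T.memTp p (tdelta T w) :=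
  ⟨(1 / (treeC q (T.level w) : ℝ)) ^ (1/p), by
    rintro x ⟨n, rfl⟩; exact Mp_tdelta_le hp hq w n⟩

lemma normTp_tdelta (hp : 0 < p) (hq : 2 ≤ q) (w : T.V) :
    T.normTp p (tdelta T w) = (1 / (treeC q (T.level w) : ℝ)) ^ (1/p) := by
  refine le_antisymm (ciSup_le (Mp_tdelta_le hp hq w)) ?_
  have := le_ciSup (memTp_tdelta hp hq w) (T.level w)
  rwa [Mp_tdelta hp, if_pos rfl] at this

lemma Mp_tdelta_comp (hp : 0 < p) (phi : T.V → T.V) (w : T.V) (n : ℕ) :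
    T.Mp p n (tdelta T w ∘ phi) = ((T.Nphi phi n w : ℝ) / (treeC q n : ℝ)) ^ (1/p) := by
  unfold HomTree.Mp
  have hs : ∑ v ∈ T.levelFinset n, ‖(tdelta T w ∘ phi) v‖ ^ p
      = (T.Nphi phi n w : ℝ) := by
    simp only [Function.comp_apply]
    rw [Finset.sum_congr rfl fun v _ => abs_tdelta_rpow hp w (phi v)]
    rw [Finset.sum_boole]
    rfl
  rw [hs, one_div, inv_mul_eq_div]


section Forward

variable (phi : T.V → T.V)

lemma point_le (hp0 : 0 < p) (hq : 2 ≤ q)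
    (hMem : ∀ f : T.V → ℂ, T.memTp p f → T.memTp p (f ∘ phi))
    (hIso : ∀ f : T.V → ℂ, T.memTp p f → T.normTp p (f ∘ phi) = T.normTp p f)
    (w : T.V) (n : ℕ) :
    (T.Nphi phi n w : ℝ) / (treeC q n : ℝ) ≤ 1 / (treeC q (T.level w) : ℝ) := by
  have hm := hMem _ (memTp_tdelta hp0 hq w)
  have key := hIso _ (memTp_tdelta hp0 hq w)
  rw [normTp_tdelta hp0 hq w] at key
  have h2 : T.Mp p n (tdelta T w ∘ phi) ≤ T.normTp p (tdelta T w ∘ phi) := le_ciSup hm n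
  rw [key, Mp_tdelta_comp hp0 phi w n] at h2
  exact le_of_rpow_le hp0 (by positivity) (by positivity) h2

lemma point_sup (hp0 : 0 < p) (hq : 2 ≤ q)
    (hMem : ∀ f : T.V → ℂ, T.memTp p f → T.memTp p (f ∘ phi))
    (hIso : ∀ f : T.V → ℂ, T.memTp p f → T.normTp p (f ∘ phi) = T.normTp p f)
    (w : T.V) :
    (⨆ n, (T.Nphi phi n w : ℝ) / (treeC q n : ℝ)) = 1 / (treeC q (T.level w) : ℝ) := by
  have hle := point_le phi hp0 hq hMem hIso w
  have hbdd : BddAbove (Set.range fun n => (T.Nphi phi n w : ℝ) / (treeC q n : ℝ)) :=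
    ⟨1 / (treeC q (T.level w) : ℝ), by rintro x ⟨n, rfl⟩; exact hle n⟩
  refine le_antisymm (ciSup_le hle) ?_
  set Y := ⨆ n, (T.Nphi phi n w : ℝ) / (treeC q n : ℝ) with hY
  have hY0 : 0 ≤ Y := le_trans (by positivity) (le_ciSup hbdd 0)
  have key := hIso _ (memTp_tdelta hp0 hq w)
  rw [normTp_tdelta hp0 hq w] at key
  have hsup : T.normTp p (tdelta T w ∘ phi) ≤ Y ^ (1/p) := by
    refine ciSup_le fun n => ?_
    rw [Mp_tdelta_comp hp0 phi w n]
    exact Real.rpow_le_rpow (by positivity) (le_ciSup hbdd n) (by positivity)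
  rw [key] at hsup
  exact le_of_rpow_le hp0 (by positivity) hY0 hsup

lemma forward_level_le (hp0 : 0 < p) (hq : 2 ≤ q)
    (hMem : ∀ f : T.V → ℂ, T.memTp p f → T.memTp p (f ∘ phi))
    (hIso : ∀ f : T.V → ℂ, T.memTp p f → T.normTp p (f ∘ phi) = T.normTp p f) :
    ∀ v : T.V, T.level (phi v) ≤ T.level v := by
  by_contra hcon
  push_neg at hcon
  obtain ⟨v₀, hv₀⟩ := hcon
  set w := phi v₀ with hwdef
  set m := T.level v₀ with hm
  set k := T.level w with hk
  have hN : 1 ≤ T.Nphi phi m w := by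
    rw [HomTree.Nphi, Nat.one_le_iff_ne_zero, ← Nat.pos_iff_ne_zero, Finset.card_pos]
    exact ⟨v₀, Finset.mem_filter.mpr ⟨mem_levelFinset.mpr rfl, rfl⟩⟩
  have hle := point_le phi hp0 hq hMem hIso w m
  have h1 : (1:ℝ) / (treeC q m : ℝ) ≤ (T.Nphi phi m w : ℝ) / (treeC q m : ℝ) := by
    gcongr
    exact_mod_cast hN
  have hlt : (1:ℝ) / (treeC q k : ℝ) < 1 / (treeC q m : ℝ) := by
    apply one_div_lt_one_div_of_lt (treeC_cast_pos hq m)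
    exact_mod_cast treeC_strictMono hq hv₀
  linarith


lemma forward_N_const (hp : 1 ≤ p) (hq : 2 ≤ q)
    (hMem : ∀ f : T.V → ℂ, T.memTp p f → T.memTp p (f ∘ phi))
    (hIso : ∀ f : T.V → ℂ, T.memTp p f → T.normTp p (f ∘ phi) = T.normTp p f) :
    ∀ k n : ℕ, ∀ w : T.V, T.level w = k → T.Nphi phi n w = T.Nmax phi k n := by
  intro k n w hw
  have hp0 : 0 < p := lt_of_lt_of_le one_pos hp
  obtain ⟨w₁, hw₁mem, hw₁⟩ := Finset.exists_mem_eq_sup (T.levelFinset k)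
    (levelFinset_nonempty hq k) (fun u => T.Nphi phi n u)
  refine le_antisymm (Finset.le_sup (mem_levelFinset.mpr hw)) ?_
  rw [HomTree.Nmax, hw₁]
  by_contra hcon
  push_neg at hcon
  have hne : w ≠ w₁ := by rintro rfl; exact lt_irrefl _ hcon
  have hw₁l : T.level w₁ = k := mem_levelFinset.mp hw₁mem
  -- the test function
  set f : T.V → ℂ := fun v => if v = w then ((((2:ℝ)⁻¹) ^ (1/p) : ℝ) : ℂ)
    else if v = w₁ then ((((3/2:ℝ)) ^ (1/p) : ℝ) : ℂ) else 1 with hf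
  set g : T.V → ℝ := fun v => ‖f v‖ ^ p with hg
  have hgval : ∀ v, g v = if v = w then (2:ℝ)⁻¹ else if v = w₁ then 3/2 else 1 := by
    intro v
    rw [hg, hf]
    dsimp only
    split
    · rw [Complex.norm_real, Real.norm_eq_abs, abs_of_nonneg (Real.rpow_nonneg (by norm_num) _),
        rpow_oneDiv_rpow hp0 (by norm_num)]
    · split
      · rw [Complex.norm_real, Real.norm_eq_abs, abs_of_nonneg (Real.rpow_nonneg (by norm_num) _),
          rpow_oneDiv_rpow hp0 (by norm_num)]
      · simp [Real.one_rpow]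
  have hsum : ∀ j, ∑ v ∈ T.levelFinset j, g v = (treeC q j : ℝ) := by
    intro j
    by_cases hj : j = k
    · subst hj
      have hwmem : w ∈ T.levelFinset j := mem_levelFinset.mpr hw
      have hw1mem' : w₁ ∈ (T.levelFinset j).erase w :=
        Finset.mem_erase.mpr ⟨fun h => hne h.symm, hw₁mem⟩
      have hcard2 : 2 ≤ (T.levelFinset j).card := by
        have := Finset.one_lt_card.mpr ⟨w, hwmem, w₁, hw₁mem, hne⟩
        omega
      rw [← Finset.sum_erase_add _ _ hwmem, ← Finset.sum_erase_add _ _ hw1mem']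
      have hrest : ∀ v ∈ ((T.levelFinset j).erase w).erase w₁, g v = 1 := by
        intro v hv
        have hv1 := Finset.ne_of_mem_erase hv
        have hv2 := Finset.ne_of_mem_erase (Finset.mem_of_mem_erase hv)
        rw [hgval, if_neg hv2, if_neg hv1]
      rw [Finset.sum_congr rfl hrest, Finset.sum_const,
        Finset.card_erase_of_mem hw1mem', Finset.card_erase_of_mem hwmem,
        card_levelFinset, hgval w, hgval w₁, if_pos rfl, if_neg (fun h => hne h.symm),
        if_pos rfl, nsmul_eq_mul, mul_one]
      rw [card_levelFinset] at hcard2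
      have : ((treeC q j - 1 - 1 : ℕ) : ℝ) = (treeC q j : ℝ) - 2 := by
        push_cast [Nat.cast_sub (by omega : 1 ≤ treeC q j - 1),
          Nat.cast_sub (by omega : 1 ≤ treeC q j)]
        ring
      rw [this]
      ring
    · have hone : ∀ v ∈ T.levelFinset j, g v = 1 := by
        intro v hv
        have hvl : T.level v = j := mem_levelFinset.mp hv
        have h1 : v ≠ w := fun h => hj (by rw [← hvl, h, hw])
        have h2 : v ≠ w₁ := fun h => hj (by rw [← hvl, h, hw₁l])
        rw [hgval, if_neg h1, if_neg h2]
      rw [Finset.sum_congr rfl hone, Finset.sum_const, card_levelFinset,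
        nsmul_eq_mul, mul_one]
  have hMpf : ∀ j, T.Mp p j f = 1 := by
    intro j
    unfold HomTree.Mp
    have : ∑ v ∈ T.levelFinset j, ‖f v‖ ^ p = (treeC q j : ℝ) := by
      rw [← hsum j]
    rw [this, one_div, inv_mul_cancel₀ (ne_of_gt (treeC_cast_pos hq j)), Real.one_rpow]
  have hmemf : T.memTp p f := ⟨1, by rintro x ⟨j, rfl⟩; exact le_of_eq (hMpf j)⟩
  have hnormf : T.normTp p f = 1 := by
    have : (fun j => T.Mp p j f) = fun _ => (1:ℝ) := funext hMpf
    rw [HomTree.normTp, this, ciSup_const]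
  -- composition sum at level n
  set t : Finset T.V := insert w (insert w₁ ((T.levelFinset n).image phi)) with ht
  have hwt : w ∈ t := Finset.mem_insert_self _ _
  have hw₁t : w₁ ∈ t := Finset.mem_insert_of_mem (Finset.mem_insert_self _ _)
  have hmaps : ∀ v ∈ T.levelFinset n, phi v ∈ t := fun v hv =>
    Finset.mem_insert_of_mem (Finset.mem_insert_of_mem (Finset.mem_image_of_mem _ hv))
  have hcount : ∑ u ∈ t, (T.Nphi phi n u : ℝ) = (treeC q n : ℝ) := by
    have := Finset.card_eq_sum_card_fiberwise hmaps
    rw [card_levelFinset] at this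
    exact_mod_cast this.symm
  have hS : ∑ v ∈ T.levelFinset n, g (phi v)
      = (treeC q n : ℝ) + ((T.Nphi phi n w₁ : ℝ) - (T.Nphi phi n w : ℝ)) / 2 := by
    rw [sum_comp_fiber phi hmaps g]
    have hsplit : ∀ u ∈ t, (T.Nphi phi n u : ℝ) * g u
        = (T.Nphi phi n u : ℝ)
          + ((if u = w then (T.Nphi phi n u : ℝ) * (-(2⁻¹)) else 0)
          + (if u = w₁ then (T.Nphi phi n u : ℝ) * 2⁻¹ else 0)) := by
      intro u _
      rw [hgval u]
      by_cases h1 : u = w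
      · subst h1
        rw [if_pos rfl, if_pos rfl, if_neg hne]
        ring
      · by_cases h2 : u = w₁
        · subst h2
          rw [if_neg h1, if_pos rfl, if_neg h1, if_pos rfl]
          ring
        · rw [if_neg h1, if_neg h2, if_neg h1, if_neg h2]
          ring
    rw [Finset.sum_congr rfl hsplit, Finset.sum_add_distrib, Finset.sum_add_distrib,
      Finset.sum_ite_eq' t w (fun u => (T.Nphi phi n u : ℝ) * (-(2⁻¹))),
      Finset.sum_ite_eq' t w₁ (fun u => (T.Nphi phi n u : ℝ) * 2⁻¹),
      if_pos hwt, if_pos hw₁t, hcount]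
    ring
  -- contradiction
  have hMpcomp : T.Mp p n (f ∘ phi)
      = ((1 / (treeC q n : ℝ)) * ∑ v ∈ T.levelFinset n, g (phi v)) ^ (1/p) := by
    unfold HomTree.Mp
    rw [hg]
    simp only [Function.comp_apply]
  have hd : (0:ℝ) < ((T.Nphi phi n w₁ : ℝ) - (T.Nphi phi n w : ℝ)) / 2 := by
    have : (T.Nphi phi n w : ℝ) < (T.Nphi phi n w₁ : ℝ) := by exact_mod_cast hcon
    linarith
  have hgt : 1 < T.Mp p n (f ∘ phi) := by
    rw [hMpcomp, hS]
    have hn0 := treeC_cast_pos hq n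
    have hbase : 1 < (1 / (treeC q n : ℝ))
        * ((treeC q n : ℝ) + ((T.Nphi phi n w₁ : ℝ) - (T.Nphi phi n w : ℝ)) / 2) := by
      have h1 : (1 / (treeC q n : ℝ)) * (treeC q n : ℝ) = 1 := by
        field_simp
      have h2 : (1 / (treeC q n : ℝ)) * (treeC q n : ℝ)
          < (1 / (treeC q n : ℝ))
            * ((treeC q n : ℝ) + ((T.Nphi phi n w₁ : ℝ) - (T.Nphi phi n w : ℝ)) / 2) := by
        apply mul_lt_mul_of_pos_left _ (by positivity)
        linarith
      linarith
    calc (1:ℝ) = 1 ^ (1/p) := (Real.one_rpow _).symm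
    _ < _ := Real.rpow_lt_rpow (by norm_num) hbase (by positivity)
  have hle' : T.Mp p n (f ∘ phi) ≤ T.normTp p (f ∘ phi) := le_ciSup (hMem f hmemf) n
  rw [hIso f hmemf, hnormf] at hle'
  linarith


lemma forward_sum' (hq : 2 ≤ q)
    (h1 : ∀ v : T.V, T.level (phi v) ≤ T.level v)
    (h3 : ∀ k n : ℕ, ∀ w : T.V, T.level w = k → T.Nphi phi n w = T.Nmax phi k n) :
    ∀ n : ℕ, ∑ k ∈ Finset.range (n + 1),
      (treeC q k : ℝ) * (T.Nmax phi k n : ℝ) / (treeC q n : ℝ) = 1 := by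
  intro n
  have hmaps : ∀ v ∈ T.levelFinset n, phi v ∈ (Finset.range (n+1)).biUnion T.levelFinset := by
    intro v hv
    exact Finset.mem_biUnion.mpr ⟨T.level (phi v),
      Finset.mem_range.mpr (Nat.lt_succ_of_le (le_of_le_of_eq (h1 v) (mem_levelFinset.mp hv))),
      mem_levelFinset.mpr rfl⟩
  have hnat : ∑ k ∈ Finset.range (n+1), treeC q k * T.Nmax phi k n = treeC q n := by
    have hcount := Finset.card_eq_sum_card_fiberwise hmaps
    rw [Finset.sum_biUnion (level_pairwiseDisjoint _), card_levelFinset] at hcount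
    rw [hcount]
    refine Finset.sum_congr rfl fun k _ => ?_
    have hin : ∀ w ∈ T.levelFinset k,
        ((T.levelFinset n).filter fun a => phi a = w).card = T.Nmax phi k n :=
      fun w hw => h3 k n w (mem_levelFinset.mp hw)
    rw [Finset.sum_congr rfl hin, Finset.sum_const, card_levelFinset, smul_eq_mul]
  rw [← Finset.sum_div, div_eq_one_iff_eq (ne_of_gt (treeC_cast_pos hq n))]
  exact_mod_cast hnat

lemma forward_sup' (hp0 : 0 < p) (hq : 2 ≤ q)
    (hMem : ∀ f : T.V → ℂ, T.memTp p f → T.memTp p (f ∘ phi))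
    (hIso : ∀ f : T.V → ℂ, T.memTp p f → T.normTp p (f ∘ phi) = T.normTp p f)
    (h3 : ∀ k n : ℕ, ∀ w : T.V, T.level w = k → T.Nphi phi n w = T.Nmax phi k n) :
    ∀ k : ℕ, (⨆ n : ℕ, (treeC q k : ℝ) * (T.Nmax phi k n : ℝ) / (treeC q n : ℝ)) = 1 := by
  intro k
  obtain ⟨w, hwmem⟩ := levelFinset_nonempty hq k
  have hwl : T.level w = k := mem_levelFinset.mp hwmem
  have hCk := treeC_cast_pos hq k
  have hrep : ∀ n, (treeC q k : ℝ) * (T.Nmax phi k n : ℝ) / (treeC q n : ℝ)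
      = (treeC q k : ℝ) * ((T.Nphi phi n w : ℝ) / (treeC q n : ℝ)) := by
    intro n
    rw [← h3 k n w hwl]
    ring
  have hle := point_le phi hp0 hq hMem hIso w
  rw [hwl] at hle
  have hsup := point_sup phi hp0 hq hMem hIso w
  rw [hwl] at hsup
  have hub : ∀ n, (treeC q k : ℝ) * (T.Nmax phi k n : ℝ) / (treeC q n : ℝ) ≤ 1 := by
    intro n
    rw [hrep n]
    calc (treeC q k : ℝ) * ((T.Nphi phi n w : ℝ) / (treeC q n : ℝ))
        ≤ (treeC q k : ℝ) * (1 / (treeC q k : ℝ)) :=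
          mul_le_mul_of_nonneg_left (hle n) hCk.le
    _ = 1 := by field_simp
  have hbddρ : BddAbove (Set.range fun n =>
      (treeC q k : ℝ) * (T.Nmax phi k n : ℝ) / (treeC q n : ℝ)) :=
    ⟨1, by rintro x ⟨n, rfl⟩; exact hub n⟩
  refine le_antisymm (ciSup_le hub) ?_
  set S := ⨆ n : ℕ, (treeC q k : ℝ) * (T.Nmax phi k n : ℝ) / (treeC q n : ℝ) with hs
  have hyS : ∀ n, (T.Nphi phi n w : ℝ) / (treeC q n : ℝ) ≤ S / (treeC q k : ℝ) := by
    intro n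
    rw [le_div_iff₀ hCk, mul_comm]
    calc (treeC q k : ℝ) * ((T.Nphi phi n w : ℝ) / (treeC q n : ℝ))
        = (treeC q k : ℝ) * (T.Nmax phi k n : ℝ) / (treeC q n : ℝ) := (hrep n).symm
    _ ≤ S := le_ciSup hbddρ n
  have : 1 / (treeC q k : ℝ) ≤ S / (treeC q k : ℝ) := by
    rw [← hsup]
    exact ciSup_le hyS
  exact (div_le_div_iff_of_pos_right hCk).mp this


lemma Nmax_zero_of_lt (h1 : ∀ v : T.V, T.level (phi v) ≤ T.level v) {k n : ℕ} (hnk : n < k) :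
    T.Nmax phi k n = 0 := by
  refine Nat.le_antisymm (Finset.sup_le fun w hw => ?_) (Nat.zero_le _)
  rw [Nat.le_zero, HomTree.Nphi, Finset.card_eq_zero, Finset.filter_eq_empty_iff]
  intro v hv hphiv
  have hlev := h1 v
  rw [hphiv, mem_levelFinset.mp hw, mem_levelFinset.mp hv] at hlev
  omega

lemma backward_sum_eq (hq : 2 ≤ q)
    (h1 : ∀ v : T.V, T.level (phi v) ≤ T.level v)
    (h3 : ∀ k n : ℕ, ∀ w : T.V, T.level w = k → T.Nphi phi n w = T.Nmax phi k n)
    (f : T.V → ℂ) (n : ℕ) :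
    (1 / (treeC q n : ℝ)) * ∑ v ∈ T.levelFinset n, ‖f (phi v)‖ ^ p
      = ∑ k ∈ Finset.range (n + 1),
          ((treeC q k : ℝ) * (T.Nmax phi k n : ℝ) / (treeC q n : ℝ)) *
            ((1 / (treeC q k : ℝ)) * ∑ w ∈ T.levelFinset k, ‖f w‖ ^ p) := by
  have hmaps : ∀ v ∈ T.levelFinset n, phi v ∈ (Finset.range (n+1)).biUnion T.levelFinset := by
    intro v hv
    exact Finset.mem_biUnion.mpr ⟨T.level (phi v),
      Finset.mem_range.mpr (Nat.lt_succ_of_le (le_of_le_of_eq (h1 v) (mem_levelFinset.mp hv))),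
      mem_levelFinset.mpr rfl⟩
  rw [sum_comp_fiber phi hmaps (fun w => ‖f w‖ ^ p),
    Finset.sum_biUnion (level_pairwiseDisjoint _), Finset.mul_sum]
  refine Finset.sum_congr rfl fun k _ => ?_
  have hin : ∀ w ∈ T.levelFinset k,
      (T.Nphi phi n w : ℝ) * ‖f w‖ ^ p
        = (T.Nmax phi k n : ℝ) * ‖f w‖ ^ p := by
    intro w hw
    rw [h3 k n w (mem_levelFinset.mp hw)]
  rw [Finset.sum_congr rfl hin, ← Finset.mul_sum]
  have hk0 := (treeC_cast_pos hq k).ne'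
  have hn0 := (treeC_cast_pos hq n).ne'
  field_simp

lemma backward_key (hp0 : 0 < p) (hq : 2 ≤ q)
    (h1 : ∀ v : T.V, T.level (phi v) ≤ T.level v)
    (h3 : ∀ k n : ℕ, ∀ w : T.V, T.level w = k → T.Nphi phi n w = T.Nmax phi k n)
    (f : T.V → ℂ) (n : ℕ) :
    T.Mp p n (f ∘ phi) ^ p = ∑ k ∈ Finset.range (n + 1),
      ((treeC q k : ℝ) * (T.Nmax phi k n : ℝ) / (treeC q n : ℝ)) * (T.Mp p k f ^ p) := by
  rw [Mp_rpow hp0 hq]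
  simp only [Function.comp_apply]
  rw [backward_sum_eq phi hq h1 h3 f n]
  refine Finset.sum_congr rfl fun k _ => ?_
  rw [Mp_rpow hp0 hq]

lemma backward_main (hp : 1 ≤ p) (hq : 2 ≤ q)
    (h1 : ∀ v : T.V, T.level (phi v) ≤ T.level v)
    (h2 : ∀ n : ℕ, ∑ k ∈ Finset.range (n + 1),
      (treeC q k : ℝ) * (T.Nmax phi k n : ℝ) / (treeC q n : ℝ) = 1)
    (h3 : ∀ k n : ℕ, ∀ w : T.V, T.level w = k → T.Nphi phi n w = T.Nmax phi k n)
    (h4 : ∀ k : ℕ, (⨆ n : ℕ,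
      (treeC q k : ℝ) * (T.Nmax phi k n : ℝ) / (treeC q n : ℝ)) = 1) :
    (∀ f : T.V → ℂ, T.memTp p f → T.memTp p (f ∘ phi)) ∧
      (∀ f : T.V → ℂ, T.memTp p f → T.normTp p (f ∘ phi) = T.normTp p f) := by
  have hp0 : 0 < p := lt_of_lt_of_le one_pos hp
  have lam_nonneg : ∀ k n : ℕ, 0 ≤ (treeC q k : ℝ) * (T.Nmax phi k n : ℝ) / (treeC q n : ℝ) :=
    fun k n => by positivity
  have upper : ∀ f : T.V → ℂ, T.memTp p f → ∀ n, T.Mp p n (f ∘ phi) ≤ T.normTp p f := by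
    intro f hf n
    have ha0 : 0 ≤ T.normTp p f := le_trans (Mp_nonneg 0 f) (le_ciSup hf 0)
    have hbound : T.Mp p n (f ∘ phi) ^ p ≤ T.normTp p f ^ p := by
      rw [backward_key phi hp0 hq h1 h3 f n]
      calc ∑ k ∈ Finset.range (n + 1),
            ((treeC q k : ℝ) * (T.Nmax phi k n : ℝ) / (treeC q n : ℝ)) * (T.Mp p k f ^ p)
          ≤ ∑ k ∈ Finset.range (n + 1),
            ((treeC q k : ℝ) * (T.Nmax phi k n : ℝ) / (treeC q n : ℝ)) * (T.normTp p f ^ p) := by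
            refine Finset.sum_le_sum fun k _ => ?_
            refine mul_le_mul_of_nonneg_left ?_ (lam_nonneg k n)
            exact Real.rpow_le_rpow (Mp_nonneg k f) (le_ciSup hf k) hp0.le
      _ = (∑ k ∈ Finset.range (n + 1),
            (treeC q k : ℝ) * (T.Nmax phi k n : ℝ) / (treeC q n : ℝ)) * (T.normTp p f ^ p) := by
            rw [← Finset.sum_mul]
      _ = T.normTp p f ^ p := by rw [h2 n, one_mul]
    calc T.Mp p n (f ∘ phi) = (T.Mp p n (f ∘ phi) ^ p) ^ (1/p) :=
          (rpow_rpow_oneDiv hp0 (Mp_nonneg n _)).symm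
    _ ≤ (T.normTp p f ^ p) ^ (1/p) :=
          Real.rpow_le_rpow (Real.rpow_nonneg (Mp_nonneg n _) p) hbound (by positivity)
    _ = T.normTp p f := rpow_rpow_oneDiv hp0 ha0
  have hmem : ∀ f : T.V → ℂ, T.memTp p f → T.memTp p (f ∘ phi) := by
    intro f hf
    exact ⟨T.normTp p f, by rintro x ⟨n, rfl⟩; exact upper f hf n⟩
  refine ⟨hmem, fun f hf => ?_⟩
  refine le_antisymm (ciSup_le (upper f hf)) ?_
  have hmem' := hmem f hf
  have hb0 : 0 ≤ T.normTp p (f ∘ phi) := le_trans (Mp_nonneg 0 _) (le_ciSup hmem' 0)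
  refine ciSup_le fun k => ?_
  have hmk : T.Mp p k f ^ p ≤ T.normTp p (f ∘ phi) ^ p := by
    by_cases hm0 : T.Mp p k f ^ p = 0
    · rw [hm0]; exact Real.rpow_nonneg hb0 p
    have hmpos : 0 < T.Mp p k f ^ p :=
      lt_of_le_of_ne (Real.rpow_nonneg (Mp_nonneg k f) p) (Ne.symm hm0)
    have hlam : ∀ n : ℕ, (treeC q k : ℝ) * (T.Nmax phi k n : ℝ) / (treeC q n : ℝ)
        ≤ T.normTp p (f ∘ phi) ^ p / (T.Mp p k f ^ p) := by
      intro n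
      rcases lt_or_ge n k with hnk | hkn
      · rw [Nmax_zero_of_lt phi h1 hnk]
        push_cast
        rw [mul_zero, zero_div]
        exact div_nonneg (Real.rpow_nonneg hb0 p) hmpos.le
      · have h5 : ((treeC q k : ℝ) * (T.Nmax phi k n : ℝ) / (treeC q n : ℝ)) * (T.Mp p k f ^ p)
            ≤ T.Mp p n (f ∘ phi) ^ p := by
          rw [backward_key phi hp0 hq h1 h3 f n]
          exact Finset.single_le_sum
            (fun j _ => mul_nonneg (lam_nonneg j n) (Real.rpow_nonneg (Mp_nonneg j f) p))
            (Finset.mem_range.mpr (by omega))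
        have h6 : T.Mp p n (f ∘ phi) ^ p ≤ T.normTp p (f ∘ phi) ^ p :=
          Real.rpow_le_rpow (Mp_nonneg n _) (le_ciSup hmem' n) hp0.le
        rw [le_div_iff₀ hmpos]
        linarith
    have hS := ciSup_le hlam
    rw [h4 k] at hS
    exact (one_le_div hmpos).mp hS
  calc T.Mp p k f = (T.Mp p k f ^ p) ^ (1/p) := (rpow_rpow_oneDiv hp0 (Mp_nonneg k f)).symm
  _ ≤ (T.normTp p (f ∘ phi) ^ p) ^ (1/p) :=
        Real.rpow_le_rpow (Real.rpow_nonneg (Mp_nonneg k f) p) hmk (by positivity)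
  _ = T.normTp p (f ∘ phi) := rpow_rpow_oneDiv hp0 hb0

end Forward
end Aux

/-- For `q ≥ 2` and `1 ≤ p < ∞`, with `λ_{k,n} = c_k N_{k,n}/c_n`: `C_φ` is an isometry
on `T_p` iff (1) `|φ v| ≤ |v|`; (2) `∑_{k=0}^n λ_{k,n} = 1` for all `n`;
(3) `N_φ(n, w) = N_{k,n}` whenever `|w| = k`; (4) `sup_n λ_{k,n} = 1` for all `k`. -/
theorem isometry_comp_Tp_iff (q : ℕ) (hq : 2 ≤ q) (T : HomTree q) (p : ℝ) (hp : 1 ≤ p)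
    (phi : T.V → T.V) :
    ((∀ f : T.V → ℂ, T.memTp p f → T.memTp p (f ∘ phi)) ∧
      (∀ f : T.V → ℂ, T.memTp p f → T.normTp p (f ∘ phi) = T.normTp p f)) ↔
    ((∀ v : T.V, T.level (phi v) ≤ T.level v) ∧
      (∀ n : ℕ, ∑ k ∈ Finset.range (n + 1),
        (treeC q k : ℝ) * (T.Nmax phi k n : ℝ) / (treeC q n : ℝ) = 1) ∧
      (∀ k n : ℕ, ∀ w : T.V, T.level w = k → T.Nphi phi n w = T.Nmax phi k n) ∧
      (∀ k : ℕ, (⨆ n : ℕ,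
        (treeC q k : ℝ) * (T.Nmax phi k n : ℝ) / (treeC q n : ℝ)) = 1)) := by
  have hp0 : 0 < p := lt_of_lt_of_le one_pos hp
  constructor
  · rintro ⟨hMem, hIso⟩
    have h1 := forward_level_le phi hp0 hq hMem hIso
    have h3 := forward_N_const phi hp hq hMem hIso
    exact ⟨h1, forward_sum' phi hq h1 h3, h3, forward_sup' phi hp0 hq hMem hIso h3⟩
  · rintro ⟨h1, h2, h3, h4⟩
    exact backward_main phi hp hq h1 h2 h3 h4
end
end

section
/- Let T be the (q+1)-homogeneous rooted tree with q ≥ 2 and let 1 ≤ p < ∞. Then no self-map φ of T induces a compact composition operator on T_{p,0}: for every self-map φ of T, the operator C_φ is not a compact operator on T_{p,0}. -/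
open scoped BigOperators Classical

noncomputable section

namespace HomTree

variable {q : ℕ} (T : HomTree q)

/-- `C_φ` is a compact operator on `T_{p,0}`: it is bounded on `T_{p,0}` and the image of
the closed unit ball of `T_{p,0}` is relatively compact in `T_{p,0}`, i.e. every sequence
in the image of the closed unit ball has a subsequence converging in norm to an element
of `T_{p,0}`. -/
def CompactCompTp0 (p : ℝ) (phi : T.V → T.V) : Prop :=
  T.BoundedCompTp0 p phi ∧
  ∀ f : ℕ → T.V → ℂ, (∀ k, T.memTp0 p (f k)) → (∀ k, T.normTp p (f k) ≤ 1) →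
    ∃ (g : T.V → ℂ) (s : ℕ → ℕ), T.memTp0 p g ∧ StrictMono s ∧
      Filter.Tendsto (fun k => T.normTp p ((f (s k)) ∘ phi - g)) Filter.atTop (nhds 0)

end HomTree

private lemma aux_pow_bound {p : ℝ} (hp : 0 < p) {a : ℝ} (ha : 0 ≤ a) :
    (1 + a) ^ p ≤ 2 ^ p * (1 + a ^ p) := by
  have hm1 : (1:ℝ) ≤ max 1 a := le_max_left 1 a
  have hm2 : a ≤ max 1 a := le_max_right 1 a
  have h1 : (1:ℝ) + a ≤ 2 * max 1 a := by linarith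
  have h2 : (1 + a) ^ p ≤ (2 * max 1 a) ^ p :=
    Real.rpow_le_rpow (by linarith) h1 hp.le
  have h3 : (2 * max 1 a) ^ p = 2 ^ p * (max 1 a) ^ p :=
    Real.mul_rpow (by norm_num) (by linarith)
  have h4 : (max 1 a) ^ p ≤ 1 + a ^ p := by
    rcases le_total a 1 with h | h
    · rw [max_eq_left h, Real.one_rpow]
      have := Real.rpow_nonneg ha p
      linarith
    · rw [max_eq_right h]; linarith
  have h2p : (0:ℝ) ≤ 2 ^ p := Real.rpow_nonneg (by norm_num) p
  calc (1 + a) ^ p ≤ 2 ^ p * (max 1 a) ^ p := by rw [← h3]; exact h2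
    _ ≤ 2 ^ p * (1 + a ^ p) := by nlinarith

private lemma aux_lower {p : ℝ} (hp : 0 < p) (z : ℂ) :
    (1/2 : ℝ) ^ p - ‖z‖ ^ p ≤ ‖1 - z‖ ^ p := by
  rcases le_total (1/2 : ℝ) (‖z‖) with h | h
  · have h1 : (1/2 : ℝ) ^ p ≤ ‖z‖ ^ p :=
      Real.rpow_le_rpow (by norm_num) h hp.le
    have h2 := Real.rpow_nonneg (norm_nonneg (1 - z)) p
    linarith
  · have h1 : (1/2 : ℝ) ≤ ‖1 - z‖ := by
      have h0 := norm_sub_norm_le (1:ℂ) z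
      simp only [norm_one] at h0
      linarith
    have h2 : (1/2 : ℝ) ^ p ≤ ‖1 - z‖ ^ p :=
      Real.rpow_le_rpow (by norm_num) h1 hp.le
    have h3 := Real.rpow_nonneg (norm_nonneg z) p
    linarith

/-- For `q ≥ 2` and `1 ≤ p < ∞`, no self-map of the `(q+1)`-homogeneous tree induces a
compact composition operator on `T_{p,0}`. -/
theorem no_compact_comp_Tp0 (q : ℕ) (hq : 2 ≤ q) (T : HomTree q)
    (p : ℝ) (hp : 1 ≤ p) (phi : T.V → T.V) :
    ¬ T.CompactCompTp0 p phi := by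
  rintro ⟨-, hcpt⟩
  have hp0 : (0:ℝ) < p := lt_of_lt_of_le one_pos hp
  have hpne : p ≠ 0 := ne_of_gt hp0
  have hip : (0:ℝ) < 1/p := by positivity
  have hipne : (1:ℝ)/p ≠ 0 := ne_of_gt hip
  have hcpos : ∀ n, (0:ℝ) < (treeC q n : ℝ) := by
    intro n
    have h : 0 < treeC q n := by
      unfold treeC
      split
      · norm_num
      · have hq0 : 0 < q := by omega
        positivity
    exact_mod_cast h
  have hcard : ∀ n, ((T.levelFinset n).card : ℝ) = (treeC q n : ℝ) := by
    intro n
    have h := T.card_level n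
    exact_mod_cast h
  have hmemlvl : ∀ n (v : T.V), v ∈ T.levelFinset n ↔ T.level v = n :=
    fun n v => (T.finiteLevel n).mem_toFinset
  -- the test functions
  set S : ℕ → Finset T.V := fun k => (T.levelFinset k).image phi with hS
  set f : ℕ → T.V → ℂ := fun k v => if v ∈ S k then 1 else 0 with hf
  have hfabsp : ∀ k v, ‖f k v‖ ^ p = if v ∈ S k then 1 else 0 := by
    intro k v
    simp only [hf]
    split_ifs with h
    · simp [Real.one_rpow]
    · simp [Real.zero_rpow hpne]
  have hsumnn : ∀ k n, (0:ℝ) ≤ ∑ v ∈ T.levelFinset n, ‖f k v‖ ^ p := by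
    intro k n
    apply Finset.sum_nonneg
    intro v _
    rw [hfabsp]
    split_ifs <;> norm_num
  have hsumle : ∀ k n, ∑ v ∈ T.levelFinset n, ‖f k v‖ ^ p ≤ (treeC q n : ℝ) := by
    intro k n
    calc ∑ v ∈ T.levelFinset n, ‖f k v‖ ^ p
        ≤ ∑ _v ∈ T.levelFinset n, (1:ℝ) := by
          apply Finset.sum_le_sum
          intro v _
          rw [hfabsp]
          split_ifs <;> norm_num
      _ = (treeC q n : ℝ) := by rw [Finset.sum_const, nsmul_eq_mul, mul_one, hcard]
  have hMple : ∀ k n, T.Mp p n (f k) ≤ 1 := by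
    intro k n
    have hX0 : (0:ℝ) ≤ (1 / (treeC q n : ℝ)) * ∑ v ∈ T.levelFinset n, ‖f k v‖ ^ p :=
      mul_nonneg (le_of_lt (one_div_pos.mpr (hcpos n))) (hsumnn k n)
    have hX1 : (1 / (treeC q n : ℝ)) * ∑ v ∈ T.levelFinset n, ‖f k v‖ ^ p ≤ 1 := by
      have h1 : (1 / (treeC q n : ℝ)) * ∑ v ∈ T.levelFinset n, ‖f k v‖ ^ p
          ≤ (1 / (treeC q n : ℝ)) * (treeC q n : ℝ) :=
        mul_le_mul_of_nonneg_left (hsumle k n) (le_of_lt (one_div_pos.mpr (hcpos n)))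
      rw [one_div_mul_cancel (hcpos n).ne'] at h1
      exact h1
    calc T.Mp p n (f k)
        ≤ (1:ℝ) ^ (1/p) := Real.rpow_le_rpow hX0 hX1 hip.le
      _ = 1 := Real.one_rpow _
  have hMnn : ∀ (h : T.V → ℂ) n, 0 ≤ T.Mp p n h := by
    intro h n
    exact Real.rpow_nonneg (mul_nonneg (le_of_lt (one_div_pos.mpr (hcpos n)))
      (Finset.sum_nonneg fun v _ => Real.rpow_nonneg (norm_nonneg _) p)) _
  have hvanish : ∀ k n, (S k).sup T.level < n → T.Mp p n (f k) = 0 := by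
    intro k n hn
    have hz : ∀ v ∈ T.levelFinset n, ‖f k v‖ ^ p = 0 := by
      intro v hv
      rw [hfabsp]
      rw [if_neg]
      intro hvS
      have h1 : T.level v ≤ (S k).sup T.level := Finset.le_sup hvS
      have h2 : T.level v = n := (hmemlvl n v).mp hv
      omega
    show ((1 / (treeC q n : ℝ)) * ∑ v ∈ T.levelFinset n, ‖f k v‖ ^ p) ^ (1/p) = 0
    rw [Finset.sum_eq_zero hz, mul_zero, Real.zero_rpow hipne]
  have hmem0 : ∀ k, T.memTp0 p (f k) := by
    intro k
    constructor
    · exact ⟨1, by rintro x ⟨n, rfl⟩; exact hMple k n⟩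
    · apply Filter.Tendsto.congr' _ tendsto_const_nhds
      refine Filter.eventually_atTop.mpr ⟨(S k).sup T.level + 1, fun n hn => ?_⟩
      exact (hvanish k n (by omega)).symm
  have hnorm1 : ∀ k, T.normTp p (f k) ≤ 1 := fun k => ciSup_le (hMple k)
  obtain ⟨g, s, ⟨hgmem, hgtend⟩, hsmono, hconv⟩ := hcpt f hmem0 hnorm1
  -- r n = M_p(n,g)^p
  set r : ℕ → ℝ := fun n => (1 / (treeC q n : ℝ)) * ∑ v ∈ T.levelFinset n, ‖g v‖ ^ p
    with hrdef
  have hr0 : ∀ n, 0 ≤ r n := by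
    intro n
    simp only [hrdef]
    apply mul_nonneg
    · exact le_of_lt (one_div_pos.mpr (hcpos n))
    · exact Finset.sum_nonneg fun v _ => Real.rpow_nonneg (norm_nonneg _) p
  have hMg : ∀ n, T.Mp p n g = (r n) ^ (1/p) := fun n => rfl
  have hrM : ∀ n, r n = (T.Mp p n g) ^ p := by
    intro n
    rw [hMg, ← Real.rpow_mul (hr0 n), one_div_mul_cancel hpne, Real.rpow_one]
  have hrt : Filter.Tendsto r Filter.atTop (nhds 0) := by
    have h := hgtend.rpow_const (p := p) (Or.inr hp0.le)
    rw [Real.zero_rpow hpne] at h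
    exact h.congr fun n => (hrM n).symm
  obtain ⟨B, hB⟩ := hgmem
  have hBle : ∀ n, T.Mp p n g ≤ B := fun n => hB ⟨n, rfl⟩
  have hrB : ∀ n, r n ≤ B ^ p := by
    intro n
    rw [hrM n]
    exact Real.rpow_le_rpow (hMnn g n) (hBle n) hp0.le
  -- uniform upper bound on Mp of differences
  have hCb : ∀ j n, T.Mp p n ((f j) ∘ phi - g) ≤ (2 ^ p * (1 + B ^ p)) ^ (1/p) := by
    intro j n
    have hpt : ∀ v ∈ T.levelFinset n,
        ‖((f j) ∘ phi - g) v‖ ^ p ≤ 2 ^ p * (1 + ‖g v‖ ^ p) := by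
      intro v _
      have hfle : ‖f j (phi v)‖ ≤ 1 := by
        simp only [hf]
        split_ifs <;> simp
      have h1 : ‖f j (phi v) - g v‖ ≤ 1 + ‖g v‖ := by
        have h0 := norm_sub_le (f j (phi v)) (g v)
        linarith
      have h2 : ‖((f j) ∘ phi - g) v‖ ^ p ≤ (1 + ‖g v‖) ^ p := by
        simp only [Pi.sub_apply, Function.comp_apply]
        exact Real.rpow_le_rpow (norm_nonneg _) h1 hp0.le
      exact h2.trans (aux_pow_bound hp0 (norm_nonneg _))
    have hsum : ∑ v ∈ T.levelFinset n, ‖((f j) ∘ phi - g) v‖ ^ p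
        ≤ 2 ^ p * ((treeC q n : ℝ) + ∑ v ∈ T.levelFinset n, ‖g v‖ ^ p) := by
      calc ∑ v ∈ T.levelFinset n, ‖((f j) ∘ phi - g) v‖ ^ p
          ≤ ∑ v ∈ T.levelFinset n, 2 ^ p * (1 + ‖g v‖ ^ p) :=
            Finset.sum_le_sum hpt
        _ = 2 ^ p * ((treeC q n : ℝ) + ∑ v ∈ T.levelFinset n, ‖g v‖ ^ p) := by
            rw [← Finset.mul_sum, Finset.sum_add_distrib, Finset.sum_const, nsmul_eq_mul,
              mul_one, hcard]
    have hX : (1 / (treeC q n : ℝ)) * ∑ v ∈ T.levelFinset n, ‖((f j) ∘ phi - g) v‖ ^ p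
        ≤ 2 ^ p * (1 + B ^ p) := by
      have hcne : (treeC q n : ℝ) ≠ 0 := (hcpos n).ne'
      have h1 : (1 / (treeC q n : ℝ)) * ∑ v ∈ T.levelFinset n, ‖((f j) ∘ phi - g) v‖ ^ p
          ≤ (1 / (treeC q n : ℝ)) * (2 ^ p * ((treeC q n : ℝ) + ∑ v ∈ T.levelFinset n, ‖g v‖ ^ p)) :=
        mul_le_mul_of_nonneg_left hsum (le_of_lt (one_div_pos.mpr (hcpos n)))
      have h2 : (1 / (treeC q n : ℝ)) * (2 ^ p * ((treeC q n : ℝ) + ∑ v ∈ T.levelFinset n, ‖g v‖ ^ p))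
          = 2 ^ p * (1 + r n) := by
        simp only [hrdef]
        field_simp
        try ring
      have h3 : 2 ^ p * (1 + r n) ≤ 2 ^ p * (1 + B ^ p) := by
        have h2p : (0:ℝ) ≤ 2 ^ p := Real.rpow_nonneg (by norm_num) p
        nlinarith [hrB n]
      rw [h2] at h1
      linarith
    have hX0 : (0:ℝ) ≤ (1 / (treeC q n : ℝ)) * ∑ v ∈ T.levelFinset n, ‖((f j) ∘ phi - g) v‖ ^ p := by
      apply mul_nonneg
      · exact le_of_lt (one_div_pos.mpr (hcpos n))
      · exact Finset.sum_nonneg fun v _ => Real.rpow_nonneg (norm_nonneg _) p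
    exact Real.rpow_le_rpow hX0 hX hip.le
  have hbdd : ∀ j, BddAbove (Set.range fun n => T.Mp p n ((f j) ∘ phi - g)) :=
    fun j => ⟨(2 ^ p * (1 + B ^ p)) ^ (1/p), by rintro x ⟨n, rfl⟩; exact hCb j n⟩
  -- lower bound at level s k
  have hlow : ∀ k, (1/2:ℝ) ^ p - r (s k)
      ≤ (1 / (treeC q (s k) : ℝ)) * ∑ v ∈ T.levelFinset (s k), ‖((f (s k)) ∘ phi - g) v‖ ^ p := by
    intro k
    have hpt : ∀ v ∈ T.levelFinset (s k),
        (1/2:ℝ) ^ p - ‖g v‖ ^ p ≤ ‖((f (s k)) ∘ phi - g) v‖ ^ p := by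
      intro v hv
      have hfv : f (s k) (phi v) = 1 := by
        simp only [hf]
        rw [if_pos (Finset.mem_image_of_mem phi hv)]
      simp only [Pi.sub_apply, Function.comp_apply, hfv]
      exact aux_lower hp0 (g v)
    have hsum : (treeC q (s k) : ℝ) * (1/2:ℝ) ^ p - ∑ v ∈ T.levelFinset (s k), ‖g v‖ ^ p
        ≤ ∑ v ∈ T.levelFinset (s k), ‖((f (s k)) ∘ phi - g) v‖ ^ p := by
      calc (treeC q (s k) : ℝ) * (1/2:ℝ) ^ p - ∑ v ∈ T.levelFinset (s k), ‖g v‖ ^ p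
          = ∑ v ∈ T.levelFinset (s k), ((1/2:ℝ) ^ p - ‖g v‖ ^ p) := by
            rw [Finset.sum_sub_distrib, Finset.sum_const, nsmul_eq_mul, hcard]
        _ ≤ _ := Finset.sum_le_sum hpt
    have hcne : (treeC q (s k) : ℝ) ≠ 0 := (hcpos (s k)).ne'
    have h1 := mul_le_mul_of_nonneg_left hsum
      (le_of_lt (one_div_pos.mpr (hcpos (s k))))
    have h2 : (1 / (treeC q (s k) : ℝ)) *
        ((treeC q (s k) : ℝ) * (1/2:ℝ) ^ p - ∑ v ∈ T.levelFinset (s k), ‖g v‖ ^ p)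
        = (1/2:ℝ) ^ p - r (s k) := by
      simp only [hrdef]
      field_simp
      try ring
    rw [h2] at h1
    linarith
  -- conclude
  set A : ℝ := (1/2:ℝ) ^ p / 2 with hAdef
  have hApos : 0 < A := by
    have := Real.rpow_pos_of_pos (show (0:ℝ) < 1/2 by norm_num) p
    simp only [hAdef]
    linarith
  set δ : ℝ := A ^ (1/p) with hδdef
  have hδpos : 0 < δ := Real.rpow_pos_of_pos hApos _
  have h1 : ∀ᶠ k in Filter.atTop, T.normTp p ((f (s k)) ∘ phi - g) < δ :=
    hconv.eventually (gt_mem_nhds hδpos)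
  have h2 : ∀ᶠ k in Filter.atTop, r (s k) < A :=
    (hrt.comp hsmono.tendsto_atTop).eventually (gt_mem_nhds hApos)
  obtain ⟨k, hk1, hk2⟩ := (h1.and h2).exists
  have hXA : A ≤ (1 / (treeC q (s k) : ℝ)) *
      ∑ v ∈ T.levelFinset (s k), ‖((f (s k)) ∘ phi - g) v‖ ^ p := by
    have := hlow k
    simp only [hAdef] at *
    linarith
  have hd1 : δ ≤ T.Mp p (s k) ((f (s k)) ∘ phi - g) :=
    Real.rpow_le_rpow hApos.le hXA hip.le
  have hd2 : T.Mp p (s k) ((f (s k)) ∘ phi - g) ≤ T.normTp p ((f (s k)) ∘ phi - g) :=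
    le_ciSup (hbdd (s k)) (s k)
  linarith
end
end
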